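/- arXiv:2308.05069 — 4 statements merged into one kernel-verified Lean document; each statement's English description precedes it below -/
import Mathlib

section
/- If F : [0,∞) → [0,∞) satisfies F(0)=0, F is nonnegative, and t ↦ F(t)^{1/p} is concave on [0,∞) for some p > 1, then t ↦ F(t^{1/p}) is also concave on [0,∞). -/
open Set

lemma mink {p : ℝ} (hp : 1 ≤ p) {A B C D : ℝ} (hA : 0 ≤ A) (hB : 0 ≤ B) (hC : 0 ≤ C)
    (hD : 0 ≤ D) :
    ((A + C) ^ p + (B + D) ^ p) ^ (1/p) ≤ (A ^ p + B ^ p) ^ (1/p) + (C ^ p + D ^ p) ^ (1/p) := by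
  have := Real.Lp_add_le (Finset.univ : Finset (Fin 2)) (![A, B]) (![C, D]) hp
  simpa [Fin.sum_univ_two, abs_of_nonneg, hA, hB, hC, hD, abs_of_nonneg (add_nonneg hA hC),
    abs_of_nonneg (add_nonneg hB hD)] using this

lemma aux_mono {G : ℝ → ℝ} (hG : ConcaveOn ℝ (Ici 0) G)
    (hnn : ∀ t ∈ Ici (0:ℝ), 0 ≤ G t) {a b : ℝ} (ha : 0 ≤ a) (hab : a ≤ b) : G a ≤ G b := by
  rcases eq_or_lt_of_le hab with rfl | hab
  · exact le_rfl
  by_contra h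
  push_neg at h
  have hGa0 : 0 ≤ G a := hnn a ha
  have hd : 0 < G a - G b := by linarith
  have hGb0 : 0 ≤ G b := hnn b (le_trans ha hab.le)
  obtain ⟨t, hbt, e1⟩ : ∃ t, b < t ∧ (t - b) * (G a - G b) = (b - a) * (G b + 1) := by
    refine ⟨b + (b - a) * (G b + 1) / (G a - G b), ?_, ?_⟩
    · have : 0 < (b - a) * (G b + 1) / (G a - G b) :=
        div_pos (mul_pos (by linarith) (by linarith)) hd
      linarith
    · field_simp
      ring
  have hat : 0 < t - a := by linarith
  have key := hG.2 (mem_Ici.mpr ha) (mem_Ici.mpr (by linarith : (0:ℝ) ≤ t))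
    (show (0:ℝ) ≤ (t - b)/(t - a) from le_of_lt (div_pos (by linarith) hat))
    (show (0:ℝ) ≤ (b - a)/(t - a) from le_of_lt (div_pos (by linarith) hat))
    (show (t - b)/(t - a) + (b - a)/(t - a) = 1 by field_simp; ring)
  have hcomb : ((t - b) / (t - a)) • a + ((b - a) / (t - a)) • t = b := by
    rw [smul_eq_mul, smul_eq_mul]
    field_simp
    ring
  rw [hcomb, smul_eq_mul, smul_eq_mul, div_mul_eq_mul_div, div_mul_eq_mul_div,
    ← add_div, div_le_iff₀ hat] at key
  have hGt : 0 ≤ G t := hnn t (mem_Ici.mpr (by linarith))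
  have hp2 : 0 ≤ (b - a) * G t := mul_nonneg (sub_pos.mpr hab).le hGt
  ring_nf at key e1 hp2
  linarith [key, e1, hp2]

-- the core inequality with opaque points u ≤ s ≤ v satisfying s^p = a u^p + b v^p
lemma core_ineq {p : ℝ} (hp : 1 < p) {G : ℝ → ℝ} (hG : ConcaveOn ℝ (Ici 0) G)
    (hGnn : ∀ t ∈ Ici (0:ℝ), 0 ≤ G t) (hG0 : G 0 = 0)
    {a b u v s : ℝ} (ha : 0 ≤ a) (hb : 0 ≤ b) (hab : a + b = 1)
    (hu0 : 0 ≤ u) (hus : u ≤ s) (hsv : s ≤ v)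
    (hpow : s ^ p = a * u ^ p + b * v ^ p) :
    a * G u ^ p + b * G v ^ p ≤ G s ^ p := by
  have hp0 : (0:ℝ) < p := lt_trans one_pos hp
  have hs0 : 0 ≤ s := le_trans hu0 hus
  have hv0 : 0 ≤ v := le_trans hs0 hsv
  have hGu0 : 0 ≤ G u := hGnn u hu0
  have hGv0 : 0 ≤ G v := hGnn v hv0
  have hGs0 : 0 ≤ G s := hGnn s hs0
  have hGsv : G s ≤ G v := aux_mono hG hGnn hs0 hsv
  have hGus : G u ≤ G s := aux_mono hG hGnn hu0 hus
  have star : s * G v ≤ v * G s := by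
    rcases eq_or_lt_of_le hv0 with hv | hv
    · have hs' : s = 0 := le_antisymm (hsv.trans hv.ge) hs0
      rw [hs', ← hv]
    · have h1 : (0:ℝ) ≤ s / v := div_nonneg hs0 hv0
      have h2 : (0:ℝ) ≤ 1 - s / v := by
        have := (div_le_one hv).mpr hsv
        linarith
      have hcomb : (s / v) • v + (1 - s / v) • (0:ℝ) = s := by
        rw [smul_eq_mul, smul_eq_mul]
        field_simp
        ring
      have key := hG.2 (mem_Ici.mpr hv0) (mem_Ici.mpr le_rfl) h1 h2 (by ring)
      rw [hcomb, smul_eq_mul, smul_eq_mul, hG0, mul_zero, add_zero,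
        div_mul_eq_mul_div, div_le_iff₀ hv] at key
      nlinarith [key]
  rcases eq_or_lt_of_le hsv with hseqv | hslv
  · -- s = v
    have h1 : G u ^ p ≤ G s ^ p := Real.rpow_le_rpow hGu0 hGus hp0.le
    have h2 : G v ^ p = G s ^ p := by rw [hseqv]
    nlinarith [Real.rpow_nonneg hGs0 p, h1, h2]
  · -- s < v
    have hvs : 0 < v - s := sub_pos.mpr hslv
    obtain ⟨m, hmdef⟩ : ∃ m, m = (G v - G s) / (v - s) := ⟨_, rfl⟩
    have hm0 : 0 ≤ m := hmdef ▸ div_nonneg (by linarith) hvs.le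
    obtain ⟨c, hcdef⟩ : ∃ c, c = G s - m * s := ⟨_, rfl⟩
    have hc0 : 0 ≤ c := by
      have hms : m * s ≤ G s := by
        rw [hmdef, div_mul_eq_mul_div, div_le_iff₀ hvs]
        nlinarith [star]
      rw [hcdef]
      linarith
    have lv : m * v + c = G v := by
      rw [hcdef, hmdef]
      field_simp
      ring
    have ls : m * s + c = G s := by rw [hcdef]; ring
    have lu : G u ≤ m * u + c := by
      rcases eq_or_lt_of_le hus with hueqs | hults
      · rw [hueqs, ls]
      · have hvu : 0 < v - u := by linarith
        have h1 : (0:ℝ) ≤ (v - s)/(v - u) := div_nonneg hvs.le hvu.le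
        have h2 : (0:ℝ) ≤ (s - u)/(v - u) := div_nonneg (by linarith) hvu.le
        have h3 : (v - s)/(v - u) + (s - u)/(v - u) = 1 := by field_simp; ring
        have key := hG.2 (mem_Ici.mpr hu0) (mem_Ici.mpr hv0) h1 h2 h3
        have hcomb : ((v - s)/(v - u)) • u + ((s - u)/(v - u)) • v = s := by
          rw [smul_eq_mul, smul_eq_mul]; field_simp; ring
        rw [hcomb, smul_eq_mul, smul_eq_mul, div_mul_eq_mul_div, div_mul_eq_mul_div,
          ← add_div, div_le_iff₀ hvu] at key
        rw [show m * u + c = ((v - u) * G s - (s - u) * G v)/(v - s) from by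
          rw [hcdef, hmdef]; field_simp; ring]
        rw [le_div_iff₀ hvs]
        nlinarith [key]
    -- Minkowski step
    have hq0 : (0:ℝ) < 1/p := by positivity
    have hqp : 1/p * p = 1 := by field_simp
    have hmu : 0 ≤ m * u := mul_nonneg hm0 hu0
    have hmv : 0 ≤ m * v := mul_nonneg hm0 hv0
    have haq : 0 ≤ a ^ (1/p) := Real.rpow_nonneg ha _
    have hbq : 0 ≤ b ^ (1/p) := Real.rpow_nonneg hb _
    have hap : (a ^ (1/p)) ^ p = a := by rw [← Real.rpow_mul ha, hqp, Real.rpow_one]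
    have hbp : (b ^ (1/p)) ^ p = b := by rw [← Real.rpow_mul hb, hqp, Real.rpow_one]
    have M := mink hp.le (mul_nonneg haq hmu) (mul_nonneg hbq hmv)
      (mul_nonneg haq hc0) (mul_nonneg hbq hc0)
    have e1 : (a ^ (1/p) * (m * u) + a ^ (1/p) * c) ^ p = a * (m * u + c) ^ p := by
      rw [← mul_add, Real.mul_rpow haq (by linarith : (0:ℝ) ≤ m * u + c), hap]
    have e2 : (b ^ (1/p) * (m * v) + b ^ (1/p) * c) ^ p = b * (m * v + c) ^ p := by
      rw [← mul_add, Real.mul_rpow hbq (by linarith : (0:ℝ) ≤ m * v + c), hbp]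
    have e3 : (a ^ (1/p) * (m * u)) ^ p + (b ^ (1/p) * (m * v)) ^ p = m ^ p * s ^ p := by
      rw [Real.mul_rpow haq hmu, Real.mul_rpow hbq hmv, hap, hbp,
        Real.mul_rpow hm0 hu0, Real.mul_rpow hm0 hv0, hpow]
      ring
    have e4 : (a ^ (1/p) * c) ^ p + (b ^ (1/p) * c) ^ p = c ^ p := by
      rw [Real.mul_rpow haq hc0, Real.mul_rpow hbq hc0, hap, hbp, ← add_mul, hab, one_mul]
    have e5 : (m ^ p * s ^ p) ^ (1/p) = m * s := by
      rw [← Real.mul_rpow hm0 hs0, ← Real.rpow_mul (mul_nonneg hm0 hs0),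
        mul_one_div, div_self hp0.ne', Real.rpow_one]
    have e6 : (c ^ p) ^ (1/p) = c := by
      rw [← Real.rpow_mul hc0, mul_one_div, div_self hp0.ne', Real.rpow_one]
    rw [e1, e2, e3, e4, e5, e6] at M
    have hsum0 : 0 ≤ a * (m * u + c) ^ p + b * (m * v + c) ^ p :=
      add_nonneg (mul_nonneg ha (Real.rpow_nonneg (by linarith) _))
        (mul_nonneg hb (Real.rpow_nonneg (by linarith) _))
    have M2 : a * (m * u + c) ^ p + b * (m * v + c) ^ p ≤ (m * s + c) ^ p := by
      have h := Real.rpow_le_rpow (Real.rpow_nonneg hsum0 _) M hp0.le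
      rwa [← Real.rpow_mul hsum0, one_div_mul_cancel hp0.ne', Real.rpow_one] at h
    have h1 : G u ^ p ≤ (m * u + c) ^ p := Real.rpow_le_rpow hGu0 lu hp0.le
    have h2 : G v ^ p = (m * v + c) ^ p := by rw [lv]
    calc a * G u ^ p + b * G v ^ p ≤ a * (m * u + c) ^ p + b * (m * v + c) ^ p := by
          have h3 := mul_le_mul_of_nonneg_left h1 ha
          rw [h2]
          linarith
      _ ≤ (m * s + c) ^ p := M2
      _ = G s ^ p := by rw [ls]

lemma key_ineq {p : ℝ} (hp : 1 < p) {G : ℝ → ℝ} (hG : ConcaveOn ℝ (Ici 0) G)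
    (hGnn : ∀ t ∈ Ici (0:ℝ), 0 ≤ G t) (hG0 : G 0 = 0)
    {x y a b : ℝ} (hx : 0 ≤ x) (hxy : x ≤ y) (ha : 0 ≤ a) (hb : 0 ≤ b) (hab : a + b = 1) :
    a * G (x ^ (1/p)) ^ p + b * G (y ^ (1/p)) ^ p ≤ G ((a * x + b * y) ^ (1/p)) ^ p := by
  have hp0 : (0:ℝ) < p := lt_trans one_pos hp
  have hq0 : (0:ℝ) < 1/p := by positivity
  have hy : (0:ℝ) ≤ y := le_trans hx hxy
  have hz : 0 ≤ a * x + b * y := add_nonneg (mul_nonneg ha hx) (mul_nonneg hb hy)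
  have hxz : x ≤ a * x + b * y := by nlinarith
  have hzy : a * x + b * y ≤ y := by nlinarith
  have hqp : 1/p * p = 1 := by field_simp
  refine core_ineq hp hG hGnn hG0 ha hb hab (Real.rpow_nonneg hx _)
    (Real.rpow_le_rpow hx hxz hq0.le) (Real.rpow_le_rpow hz hzy hq0.le) ?_
  rw [← Real.rpow_mul hx, ← Real.rpow_mul hy, ← Real.rpow_mul hz, hqp,
    Real.rpow_one, Real.rpow_one, Real.rpow_one]

theorem stmt_0 (p : ℝ) (hp : 1 < p) (F : ℝ → ℝ)
    (hF0 : F 0 = 0) (hFnn : ∀ t ∈ Ici (0:ℝ), 0 ≤ F t)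
    (hconc : ConcaveOn ℝ (Ici (0:ℝ)) (fun t => F t ^ (1/p))) :
    ConcaveOn ℝ (Ici (0:ℝ)) (fun t => F (t ^ (1/p))) := by
  have hp0 : (0:ℝ) < p := lt_trans one_pos hp
  have hG0 : (fun t => F t ^ (1/p)) 0 = 0 := by
    simp only [hF0]
    exact Real.zero_rpow (one_div_ne_zero hp0.ne')
  have hGnn : ∀ t ∈ Ici (0:ℝ), 0 ≤ (fun t => F t ^ (1/p)) t :=
    fun t ht => Real.rpow_nonneg (hFnn t ht) _
  have hFG : ∀ w : ℝ, 0 ≤ w → F w = (fun t => F t ^ (1/p)) w ^ p := by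
    intro w hw
    simp only
    rw [← Real.rpow_mul (hFnn w (mem_Ici.mpr hw)), one_div_mul_cancel hp0.ne', Real.rpow_one]
  refine ⟨convex_Ici 0, ?_⟩
  intro x hx y hy a b ha hb hab
  simp only [smul_eq_mul]
  have hx0 : (0:ℝ) ≤ x := hx
  have hy0 : (0:ℝ) ≤ y := hy
  have hz0 : (0:ℝ) ≤ a * x + b * y := add_nonneg (mul_nonneg ha hx0) (mul_nonneg hb hy0)
  rw [hFG _ (Real.rpow_nonneg hx0 _), hFG _ (Real.rpow_nonneg hy0 _),
    hFG _ (Real.rpow_nonneg hz0 _)]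
  rcases le_total x y with hxy | hxy
  · exact key_ineq hp hconc hGnn hG0 hx0 hxy ha hb hab
  · have h := key_ineq hp hconc hGnn hG0 hy0 hxy hb ha (by linarith)
    rw [show a * x + b * y = b * y + a * x from by ring]
    linarith [h]
end

section
/- Let H : ℝ^N → [0,∞) be convex and positively p-homogeneous for p > 1. Then H is strictly convex if and only if the sublevel set {z : H(z) ≤ 1} is strictly convex (i.e., for distinct x, y in the set and t ∈ (0,1), H(tx + (1-t)y) < 1). -/
theorem stmt_3 (N : ℕ) (hN : 1 ≤ N) (p : ℝ) (hp : 1 < p)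
    (H : EuclideanSpace ℝ (Fin N) → ℝ)
    (hconv : ConvexOn ℝ Set.univ H) (hcont : Continuous H) (hnn : ∀ z, 0 ≤ H z)
    (hhom : ∀ t > (0:ℝ), ∀ z, H (t • z) = t ^ p * H z)
    (hzero : ∀ z, H z = 0 ↔ z = 0) :
    (∀ x y : EuclideanSpace ℝ (Fin N), x ≠ y → ∀ t ∈ Set.Ioo (0:ℝ) 1,
        H (t • x + (1 - t) • y) < t * H x + (1 - t) * H y) ↔
    (∀ x y : EuclideanSpace ℝ (Fin N), x ≠ y → H x ≤ 1 → H y ≤ 1 →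
        ∀ t ∈ Set.Ioo (0:ℝ) 1, H (t • x + (1 - t) • y) < 1) := by
  constructor
  · intro hsc x y hxy hx hy t ht
    have h := hsc x y hxy t ht
    obtain ⟨ht0, ht1⟩ := ht
    nlinarith
  · intro hlev x y hxy t ht
    obtain ⟨ht0, ht1⟩ := ht
    have ht1' : 0 < 1 - t := by linarith
    by_cases hx0 : x = 0
    · -- H x = 0, y ≠ 0
      have hHx : H x = 0 := (hzero x).2 hx0
      have hy0 : y ≠ 0 := fun h => hxy (hx0.trans h.symm)
      have hyp : 0 < H y := lt_of_le_of_ne (hnn y) (fun h => hy0 ((hzero y).1 h.symm))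
      have : H (t • x + (1 - t) • y) = (1 - t) ^ p * H y := by
        rw [hx0, smul_zero, zero_add, hhom (1 - t) ht1' y]
      rw [this, hHx, mul_zero, zero_add]
      have hlt : (1 - t) ^ p < (1 - t) ^ (1 : ℝ) :=
        Real.rpow_lt_rpow_of_exponent_gt ht1' (by linarith) hp
      rw [Real.rpow_one] at hlt
      nlinarith
    · by_cases hy0 : y = 0
      · have hHy : H y = 0 := (hzero y).2 hy0
        have hxp : 0 < H x := lt_of_le_of_ne (hnn x) (fun h => hx0 ((hzero x).1 h.symm))
        have : H (t • x + (1 - t) • y) = t ^ p * H x := by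
          rw [hy0, smul_zero, add_zero, hhom t ht0 x]
        rw [this, hHy, mul_zero, add_zero]
        have hlt : t ^ p < t ^ (1 : ℝ) :=
          Real.rpow_lt_rpow_of_exponent_gt ht0 ht1 hp
        rw [Real.rpow_one] at hlt
        nlinarith
      · -- main case: both positive
        have hxp : 0 < H x := lt_of_le_of_ne (hnn x) (fun h => hx0 ((hzero x).1 h.symm))
        have hyp : 0 < H y := lt_of_le_of_ne (hnn y) (fun h => hy0 ((hzero y).1 h.symm))
        have hpne : p ≠ 0 := by positivity
        set a := (H x) ^ p⁻¹ with ha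
        set b := (H y) ^ p⁻¹ with hb
        have hap : 0 < a := Real.rpow_pos_of_pos hxp _
        have hbp : 0 < b := Real.rpow_pos_of_pos hyp _
        have hax : a ^ p = H x := Real.rpow_inv_rpow (hnn x) hpne
        have hby : b ^ p = H y := Real.rpow_inv_rpow (hnn y) hpne
        set x' := a⁻¹ • x with hx'
        set y' := b⁻¹ • y with hy'
        have hHx' : H x' = 1 := by
          rw [hx', hhom a⁻¹ (inv_pos.2 hap) x, Real.inv_rpow hap.le, hax]
          field_simp
        have hHy' : H y' = 1 := by
          rw [hy', hhom b⁻¹ (inv_pos.2 hbp) y, Real.inv_rpow hbp.le, hby]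
          field_simp
        set c := t * a + (1 - t) * b with hc
        have hcp : 0 < c := by positivity
        set s := t * a / c with hs
        have hs0 : 0 < s := by positivity
        have hs1 : s < 1 := by
          rw [hs, div_lt_one hcp, hc]
          nlinarith
        have key : t • x + (1 - t) • y = c • (s • x' + (1 - s) • y') := by
          have h1s : 1 - s = (1 - t) * b / c := by
            rw [hs, hc]; field_simp; ring
          rw [h1s, hx', hy', hs, smul_add, smul_smul, smul_smul, smul_smul, smul_smul]
          congr 1
          · congr 1
            field_simp
          · congr 1
            field_simp
        have hpow : c ^ p ≤ t * a ^ p + (1 - t) * b ^ p := by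
          have := (strictConvexOn_rpow hp).convexOn.2 (Set.mem_Ici.2 hap.le)
            (Set.mem_Ici.2 hbp.le) ht0.le ht1'.le (by ring)
          simpa [smul_eq_mul] using this
        by_cases hxy' : x' = y'
        · have hab : a ≠ b := by
            intro h
            apply hxy
            have hx1 : x = a • x' := by
              rw [hx', smul_smul, mul_inv_cancel₀ hap.ne', one_smul]
            have hy1 : y = b • y' := by
              rw [hy', smul_smul, mul_inv_cancel₀ hbp.ne', one_smul]
            rw [hx1, hy1, hxy', h]
          have heq : t • x + (1 - t) • y = c • x' := by
            rw [key, hxy', ← add_smul]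
            norm_num
          rw [heq, hhom c hcp, hHx', mul_one]
          have := (strictConvexOn_rpow hp).2 (Set.mem_Ici.2 hap.le)
            (Set.mem_Ici.2 hbp.le) hab ht0 ht1' (by ring)
          simp only [smul_eq_mul] at this
          rw [← hax, ← hby]
          exact this
        · have hmid : H (s • x' + (1 - s) • y') < 1 :=
            hlev x' y' hxy' hHx'.le hHy'.le s ⟨hs0, hs1⟩
          calc H (t • x + (1 - t) • y) = c ^ p * H (s • x' + (1 - s) • y') := by
                rw [key, hhom c hcp]
            _ < c ^ p * 1 := by
                apply mul_lt_mul_of_pos_left hmid (Real.rpow_pos_of_pos hcp p)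
            _ = c ^ p := mul_one _
            _ ≤ t * H x + (1 - t) * H y := by rw [← hax, ← hby]; exact hpow
end

section
/- Let H ∈ C²(ℝ^N \ {0}) be positively p-homogeneous (p > 1) with λ|z|^{p-2}|v|² ≤ (D²H(z)v, v) ≤ Λ|z|^{p-2}|v|² for all z ≠ 0 and v ∈ ℝ^N. Then H^{2/p} is strongly elliptic: there exist constants 0 < λ̂ ≤ Λ̂ depending only on H and p such that λ̂|v|² ≤ (D²H^{2/p}(z)v, v) ≤ Λ̂|v|² for all z ≠ 0 and v ∈ ℝ^N. -/
open InnerProductSpace Topology Filter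
open scoped RealInnerProductSpace

section Aux
variable {E : Type*} [NormedAddCommGroup E] [InnerProductSpace ℝ E] [CompleteSpace E]


lemma grad_inner (H : E → ℝ) (w v : E) : ⟪gradient H w, v⟫ = fderiv ℝ H w v := by
  simp [gradient, InnerProductSpace.toDual_symm_apply]

lemma hess_symm (H : E → ℝ) (hC1 : ContDiff ℝ 1 H) {z : E}
    (hd2 : DifferentiableAt ℝ (gradient H) z) (v w : E) :
    ⟪fderiv ℝ (gradient H) z v, w⟫ = ⟪fderiv ℝ (gradient H) z w, v⟫ := by
  set L : E →L[ℝ] StrongDual ℝ E :=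
    (toDual ℝ E).toContinuousLinearEquiv.toContinuousLinearMap with hL
  have hfd : (fun y => fderiv ℝ H y) = fun y => L (gradient H y) := by
    funext y
    simp [hL, gradient]
  have hA : HasFDerivAt (fun y => fderiv ℝ H y) (L.comp (fderiv ℝ (gradient H) z)) z := by
    rw [hfd]
    exact L.hasFDerivAt.comp z hd2.hasFDerivAt
  have hsymm := second_derivative_symmetric (f := H) (f' := fun y => fderiv ℝ H y)
    (fun y => ((hC1.differentiable one_ne_zero) y).hasFDerivAt) hA v w
  simpa [hL, toDual_apply_apply] using hsymm

lemma euler_id (H : E → ℝ) {p : ℝ} (hp : 1 < p) (hC1 : ContDiff ℝ 1 H)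
    (hhomw : ∀ t > (0:ℝ), ∀ w : E, H (t • w) = t ^ p * H w) (w : E) :
    fderiv ℝ H w w = p * H w := by
  have h1 : HasDerivAt (fun t : ℝ => t • w) w 1 := by
    simpa using (hasDerivAt_id (1:ℝ)).smul_const w
  have h2 : HasDerivAt (fun t : ℝ => H (t • w)) (fderiv ℝ H w w) 1 := by
    have := ((hC1.differentiable one_ne_zero) ((1:ℝ) • w)).hasFDerivAt.comp_hasDerivAt 1 h1
    simp only [one_smul] at this; exact this
  have h3 : HasDerivAt (fun t : ℝ => t ^ p * H w) (p * (1:ℝ) ^ (p - 1) * H w) 1 :=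
    (Real.hasDerivAt_rpow_const (Or.inl one_ne_zero)).mul_const (H w)
  have heq : (fun t : ℝ => t ^ p * H w) =ᶠ[𝓝 1] fun t : ℝ => H (t • w) := by
    filter_upwards [lt_mem_nhds (zero_lt_one)] with t ht
    exact (hhomw t ht w).symm
  have h2' : HasDerivAt (fun t : ℝ => t ^ p * H w) (fderiv ℝ H w w) 1 :=
    h2.congr_of_eventuallyEq heq
  have := h2'.unique h3
  simpa using this

lemma euler_id2 (H : E → ℝ) {p : ℝ} (hp : 1 < p) (hC1 : ContDiff ℝ 1 H)
    (hhomw : ∀ t > (0:ℝ), ∀ w : E, H (t • w) = t ^ p * H w) {z : E}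
    (hd2 : DifferentiableAt ℝ (gradient H) z) (v : E) :
    ⟪fderiv ℝ (gradient H) z v, z⟫ = (p - 1) * ⟪gradient H z, v⟫ := by
  have hdiff := hC1.differentiable one_ne_zero
  -- Φ w = ⟪gradient H w, w⟫ equals Ψ w = p * H w everywhere
  have hΦΨ : ∀ w : E, ⟪gradient H w, w⟫ = p * H w := by
    intro w
    rw [grad_inner]
    exact euler_id H hp hC1 hhomw w
  have hΦ : HasFDerivAt (fun w : E => ⟪gradient H w, w⟫)
      ((fderivInnerCLM ℝ (gradient H z, z)).comp
        ((fderiv ℝ (gradient H) z).prod (ContinuousLinearMap.id ℝ E))) z :=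
    hd2.hasFDerivAt.inner ℝ (hasFDerivAt_id z)
  have hΨ : HasFDerivAt (fun w : E => p * H w) (p • fderiv ℝ H z) z :=
    (hdiff z).hasFDerivAt.const_smul p
  have heq : (fun w : E => ⟪gradient H w, w⟫) = fun w : E => p * H w := funext hΦΨ
  rw [heq] at hΦ
  have hder := hΦ.unique hΨ
  have happ := congrArg (fun (T : E →L[ℝ] ℝ) => T v) hder
  simp only [ContinuousLinearMap.comp_apply, ContinuousLinearMap.prod_apply,
    ContinuousLinearMap.coe_id', id_eq, fderivInnerCLM_apply,
    ContinuousLinearMap.smul_apply, smul_eq_mul] at happ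
  have hg : fderiv ℝ H z v = ⟪gradient H z, v⟫ := (grad_inner H z v).symm
  rw [hg] at happ
  -- happ : ⟪gradient H z, v⟫ + ⟪A v, z⟫ = p * ⟪gradient H z, v⟫
  linarith [happ]

lemma gradG_formula (H : E → ℝ) {q : ℝ} (hC1 : ContDiff ℝ 1 H) {w : E}
    (hw : H w ≠ 0) :
    gradient (fun w => H w ^ q) w = ((q * H w ^ (q - 1)) : ℝ) • gradient H w := by
  have hφ : HasDerivAt (fun s : ℝ => s ^ q) (q * H w ^ (q - 1)) (H w) :=
    Real.hasDerivAt_rpow_const (Or.inl hw)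
  have hG : HasFDerivAt (fun w => H w ^ q)
      ((q * H w ^ (q - 1)) • fderiv ℝ H w) w :=
    hφ.comp_hasFDerivAt w ((hC1.differentiable one_ne_zero) w).hasFDerivAt
  rw [gradient, hG.fderiv, map_smul]
  rfl

lemma hessG_formula (H : E → ℝ) {q : ℝ} (hC1 : ContDiff ℝ 1 H) {z : E} (hz : z ≠ 0)
    (hpos : ∀ w : E, w ≠ 0 → 0 < H w)
    (hd2 : DifferentiableAt ℝ (gradient H) z) (v : E) :
    ⟪fderiv ℝ (gradient (fun w => H w ^ q)) z v, v⟫ =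
      (q * H z ^ (q - 1)) * ⟪fderiv ℝ (gradient H) z v, v⟫
        + (q * ((q - 1) * H z ^ (q - 2))) * ⟪gradient H z, v⟫ ^ 2 := by
  have hdiff := hC1.differentiable one_ne_zero
  set s : E → ℝ := fun w => q * H w ^ (q - 1) with hs
  -- derivative of s at z
  have hφ : HasDerivAt (fun x : ℝ => x ^ (q - 1)) ((q - 1) * H z ^ (q - 2)) (H z) := by
    have := Real.hasDerivAt_rpow_const (x := H z) (p := q - 1) (Or.inl (hpos z hz).ne')
    have h2 : q - 1 - 1 = q - 2 := by ring
    rwa [h2] at this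
  have hsc : HasFDerivAt s (q • (((q - 1) * H z ^ (q - 2)) • fderiv ℝ H z)) z :=
    (hφ.comp_hasFDerivAt z (hdiff z).hasFDerivAt).const_smul q
  have hF : HasFDerivAt (fun w => s w • gradient H w)
      (s z • fderiv ℝ (gradient H) z
        + (q • (((q - 1) * H z ^ (q - 2)) • fderiv ℝ H z)).smulRight (gradient H z)) z :=
    hsc.smul hd2.hasFDerivAt
  have heq : (gradient (fun w => H w ^ q)) =ᶠ[𝓝 z] fun w => s w • gradient H w := by
    filter_upwards [isOpen_compl_singleton.mem_nhds hz] with w hw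
    exact gradG_formula H hC1 (hpos w hw).ne'
  have hF' : HasFDerivAt (gradient (fun w => H w ^ q))
      (s z • fderiv ℝ (gradient H) z
        + (q • (((q - 1) * H z ^ (q - 2)) • fderiv ℝ H z)).smulRight (gradient H z)) z :=
    hF.congr_of_eventuallyEq heq
  rw [hF'.fderiv]
  simp only [ContinuousLinearMap.add_apply, ContinuousLinearMap.smul_apply,
    ContinuousLinearMap.smulRight_apply, smul_eq_mul]
  rw [inner_add_left, real_inner_smul_left, real_inner_smul_left]
  rw [← grad_inner H z v]
  ring

lemma psd_cs (A : E →L[ℝ] E) (hsymm : ∀ u w : E, ⟪A u, w⟫ = ⟪A w, u⟫)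
    (hpos : ∀ u : E, 0 ≤ ⟪A u, u⟫) (z v : E) (hα : 0 < ⟪A z, z⟫) :
    ⟪A z, v⟫ ^ 2 ≤ ⟪A z, z⟫ * ⟪A v, v⟫ := by
  set α := ⟪A z, z⟫
  set β := ⟪A z, v⟫
  have h0 := hpos (α • v - β • z)
  have hexp : ⟪A (α • v - β • z), α • v - β • z⟫
      = α * α * ⟪A v, v⟫ - 2 * α * β * β + β * β * α := by
    rw [map_sub, map_smul, map_smul, inner_sub_left, inner_sub_right, inner_sub_right]
    rw [real_inner_smul_left, real_inner_smul_left, real_inner_smul_right,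
      real_inner_smul_right, real_inner_smul_left, real_inner_smul_left,
      real_inner_smul_right, real_inner_smul_right]
    have h1 : ⟪A v, z⟫ = β := hsymm v z ▸ rfl
    rw [h1]
    ring
  rw [hexp] at h0
  nlinarith [h0, hα, sq_nonneg β]

end Aux

set_option maxHeartbeats 1000000 in
theorem stmt_7 (N : ℕ) (hN : 1 ≤ N) (p lam Lam : ℝ) (hp : 1 < p)
    (hlam : 0 < lam) (hLam : lam ≤ Lam)
    (H : EuclideanSpace ℝ (Fin N) → ℝ)
    (hnn : ∀ z, 0 ≤ H z) (hzero : ∀ z, H z = 0 ↔ z = 0)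
    (hC1 : ContDiff ℝ 1 H)
    (hhom : ∀ t > (0:ℝ), ∀ z, H (t • z) = t ^ p * H z)
    (hd2 : ∀ z : EuclideanSpace ℝ (Fin N), z ≠ 0 →
      DifferentiableAt ℝ (gradient H) z)
    (hell : ∀ z : EuclideanSpace ℝ (Fin N), z ≠ 0 → ∀ v,
      lam * ‖z‖ ^ (p - 2) * ‖v‖ ^ 2 ≤ (inner ℝ (fderiv ℝ (gradient H) z v) v : ℝ) ∧
      (inner ℝ (fderiv ℝ (gradient H) z v) v : ℝ) ≤ Lam * ‖z‖ ^ (p - 2) * ‖v‖ ^ 2)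
    (hd2' : ∀ z : EuclideanSpace ℝ (Fin N), z ≠ 0 →
      DifferentiableAt ℝ (gradient (fun w => H w ^ (2 / p))) z) :
    ∃ lh Lh : ℝ, 0 < lh ∧ lh ≤ Lh ∧
      ∀ z : EuclideanSpace ℝ (Fin N), z ≠ 0 → ∀ v,
        lh * ‖v‖ ^ 2 ≤
          (inner ℝ (fderiv ℝ (gradient (fun w => H w ^ (2 / p))) z v) v : ℝ) ∧
        (inner ℝ (fderiv ℝ (gradient (fun w => H w ^ (2 / p))) z v) v : ℝ) ≤
          Lh * ‖v‖ ^ 2 := by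
  have hp0 : (0:ℝ) < p := lt_trans one_pos hp
  have hp1 : (0:ℝ) < p - 1 := by linarith
  set q : ℝ := 2 / p with hqdef
  have hq : 0 < q := by positivity
  have hLam0 : 0 < Lam := lt_of_lt_of_le hlam hLam
  have hpos : ∀ w : EuclideanSpace ℝ (Fin N), w ≠ 0 → 0 < H w := by
    intro w hw
    rcases lt_or_eq_of_le (hnn w) with h | h
    · exact h
    · exact absurd ((hzero w).1 h.symm) hw
  set c₁ : ℝ := lam / (p * (p - 1)) with hc1
  set c₂ : ℝ := Lam / (p * (p - 1)) with hc2
  have hc1p : 0 < c₁ := by positivity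
  have hc2p : 0 < c₂ := by positivity
  set m : ℝ := min (c₁ ^ (q - 1)) (c₂ ^ (q - 1)) with hm
  set M : ℝ := max (c₁ ^ (q - 1)) (c₂ ^ (q - 1)) with hM
  have hmpos : 0 < m := lt_min (Real.rpow_pos_of_pos hc1p _) (Real.rpow_pos_of_pos hc2p _)
  have hMpos : 0 < M := lt_of_lt_of_le hmpos (min_le_max)
  set lh : ℝ := q * lam * m * min 1 (1 / (p - 1)) with hlh
  set Lh0 : ℝ := q * M * Lam * (1 + |q - 1| * (p / (p - 1))) with hLh0
  set Lh : ℝ := max lh Lh0 with hLh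
  have hlhpos : 0 < lh := by
    apply mul_pos (by positivity)
    exact lt_min one_pos (by positivity)
  refine ⟨lh, Lh, hlhpos, le_max_left _ _, ?_⟩
  intro z hz v
  set A := fderiv ℝ (gradient H) z with hA
  have hd2z := hd2 z hz
  have hsymm : ∀ u w : EuclideanSpace ℝ (Fin N), ⟪A u, w⟫ = ⟪A w, u⟫ :=
    fun u w => hess_symm H hC1 hd2z u w
  have heuler2 : ∀ u, ⟪A u, z⟫ = (p - 1) * ⟪gradient H z, u⟫ :=
    fun u => euler_id2 H hp hC1 hhom hd2z u
  set h : ℝ := H z with hh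
  have hhp : 0 < h := hpos z hz
  set μ : ℝ := ‖z‖ with hμdef
  have hμ : 0 < μ := norm_pos_iff.2 hz
  set ν : ℝ := μ ^ (p - 2) with hν
  have hνp : 0 < ν := Real.rpow_pos_of_pos hμ _
  have hμp : 0 < μ ^ p := Real.rpow_pos_of_pos hμ _
  set a : ℝ := ⟪A v, v⟫ with ha
  set b : ℝ := ⟪gradient H z, v⟫ with hb
  have hgradz : ⟪gradient H z, z⟫ = p * h := by
    rw [grad_inner]
    exact euler_id H hp hC1 hhom z
  have hα : ⟪A z, z⟫ = p * (p - 1) * h := by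
    rw [heuler2 z, hgradz]; ring
  have hνμ : ν * ‖z‖ ^ 2 = μ ^ p := by
    rw [hν, ← hμdef, ← Real.rpow_natCast μ 2, ← Real.rpow_add hμ]
    norm_num
  have hellz := hell z hz z
  have hbd1 : lam * μ ^ p ≤ p * (p - 1) * h := by
    rw [← hα, ← hνμ]
    calc lam * (ν * ‖z‖^2) = lam * ‖z‖ ^ (p-2) * ‖z‖^2 := by rw [hν, hμdef]; ring
    _ ≤ _ := hellz.1
  have hbd2 : p * (p - 1) * h ≤ Lam * μ ^ p := by
    rw [← hα, ← hνμ]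
    calc ⟪A z, z⟫ ≤ Lam * ‖z‖ ^ (p-2) * ‖z‖^2 := hellz.2
    _ = Lam * (ν * ‖z‖^2) := by rw [hν, hμdef]; ring
  have hhl : c₁ * μ ^ p ≤ h := by
    rw [hc1, div_mul_eq_mul_div, div_le_iff₀ (by positivity)]
    linarith only [hbd1]
  have hhu : h ≤ c₂ * μ ^ p := by
    rw [hc2, div_mul_eq_mul_div, le_div_iff₀ (by positivity)]
    linarith only [hbd2]
  set g1 : ℝ := h ^ (q - 1) with hg1
  set g2 : ℝ := h ^ (q - 2) with hg2
  have hg1p : 0 < g1 := Real.rpow_pos_of_pos hhp _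
  have hg2p : 0 < g2 := Real.rpow_pos_of_pos hhp _
  have key1 : g2 * h = g1 := by
    have e : q - 1 = (q - 2) + 1 := by ring
    rw [hg1, hg2, e, Real.rpow_add hhp, Real.rpow_one]
  have hexp0 : p * (q - 1) + (p - 2) = 0 := by
    rw [hqdef]; field_simp; ring
  have hμν : (μ ^ p) ^ (q - 1) * ν = 1 := by
    rw [hν, ← Real.rpow_mul hμ.le, ← Real.rpow_add hμ, hexp0, Real.rpow_zero]
  have key2 : m ≤ g1 * ν ∧ g1 * ν ≤ M := by
    rcases le_or_gt 0 (q - 1) with hcase | hcase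
    · have hl : (c₁ * μ ^ p) ^ (q-1) ≤ g1 :=
        Real.rpow_le_rpow (by positivity) hhl hcase
      have hu : g1 ≤ (c₂ * μ ^ p) ^ (q-1) :=
        Real.rpow_le_rpow (by positivity) hhu hcase
      rw [Real.mul_rpow hc1p.le hμp.le] at hl
      rw [Real.mul_rpow hc2p.le hμp.le] at hu
      constructor
      · calc m ≤ c₁ ^ (q-1) := min_le_left _ _
          _ = c₁ ^ (q-1) * ((μ ^ p) ^ (q-1) * ν) := by rw [hμν, mul_one]
          _ ≤ g1 * ν := by
              have := mul_le_mul_of_nonneg_right hl hνp.le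
              linarith only [this]
      · calc g1 * ν ≤ c₂ ^ (q-1) * (μ^p)^(q-1) * ν := by
              have := mul_le_mul_of_nonneg_right hu hνp.le
              linarith only [this]
          _ = c₂ ^ (q-1) := by rw [mul_assoc, hμν, mul_one]
          _ ≤ M := le_max_right _ _
    · have hl : (c₂ * μ ^ p) ^ (q-1) ≤ g1 :=
        Real.rpow_le_rpow_of_nonpos (by positivity) hhu hcase.le
      have hu : g1 ≤ (c₁ * μ ^ p) ^ (q-1) :=
        Real.rpow_le_rpow_of_nonpos (by positivity) hhl hcase.le
      rw [Real.mul_rpow hc2p.le hμp.le] at hl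
      rw [Real.mul_rpow hc1p.le hμp.le] at hu
      constructor
      · calc m ≤ c₂ ^ (q-1) := min_le_right _ _
          _ = c₂ ^ (q-1) * ((μ ^ p) ^ (q-1) * ν) := by rw [hμν, mul_one]
          _ ≤ g1 * ν := by
              have := mul_le_mul_of_nonneg_right hl hνp.le
              linarith only [this]
      · calc g1 * ν ≤ c₁ ^ (q-1) * (μ^p)^(q-1) * ν := by
              have := mul_le_mul_of_nonneg_right hu hνp.le
              linarith only [this]
          _ = c₁ ^ (q-1) := by rw [mul_assoc, hμν, mul_one]
          _ ≤ M := le_max_left _ _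
  have key3 : lam * ν * ‖v‖ ^ 2 ≤ a ∧ a ≤ Lam * ν * ‖v‖ ^ 2 := hell z hz v
  have hApos : ∀ u, 0 ≤ ⟪A u, u⟫ := by
    intro u
    exact le_trans (by positivity) (hell z hz u).1
  have hαpos : 0 < ⟪A z, z⟫ := by rw [hα]; positivity
  have hcs := psd_cs A hsymm hApos z v hαpos
  have hAzv : ⟪A z, v⟫ = (p - 1) * b := by
    rw [← heuler2 v, hsymm z v]
  have key4 : b ^ 2 * (p - 1) ≤ p * h * a := by
    rw [hAzv, hα] at hcs
    nlinarith only [hcs, hp1]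
  have EQ : (inner ℝ (fderiv ℝ (gradient (fun w => H w ^ (2 / p))) z v) v : ℝ) =
      (q * g1) * a + (q * ((q - 1) * g2)) * b ^ 2 := by
    have := hessG_formula H (q := q) hC1 hz hpos hd2z v
    rw [hqdef] at this ⊢
    rw [this]
  rw [EQ]
  have hg2b : g2 * b ^ 2 * (p - 1) ≤ p * (g1 * a) := by
    calc g2 * b ^ 2 * (p - 1) = g2 * (b ^ 2 * (p - 1)) := by ring
      _ ≤ g2 * (p * h * a) := mul_le_mul_of_nonneg_left key4 hg2p.le
      _ = p * ((g2 * h) * a) := by ring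
      _ = p * (g1 * a) := by rw [key1]
  have hle2 : g2 * b ^ 2 ≤ (p / (p - 1)) * (g1 * a) := by
    rw [div_mul_eq_mul_div, le_div_iff₀ hp1]
    linarith only [hg2b]
  have hg1al : m * (lam * ‖v‖ ^ 2) ≤ g1 * a := by
    calc m * (lam * ‖v‖ ^ 2) ≤ (g1 * ν) * (lam * ‖v‖ ^ 2) :=
          mul_le_mul_of_nonneg_right key2.1 (by positivity)
      _ = g1 * (lam * ν * ‖v‖ ^ 2) := by ring
      _ ≤ g1 * a := mul_le_mul_of_nonneg_left key3.1 hg1p.le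
  have hg1au : g1 * a ≤ M * (Lam * ‖v‖ ^ 2) := by
    calc g1 * a ≤ g1 * (Lam * ν * ‖v‖ ^ 2) := mul_le_mul_of_nonneg_left key3.2 hg1p.le
      _ = (g1 * ν) * (Lam * ‖v‖ ^ 2) := by ring
      _ ≤ M * (Lam * ‖v‖ ^ 2) := mul_le_mul_of_nonneg_right key2.2 (by positivity)
  constructor
  · rcases le_or_gt 1 q with hq1 | hq1
    · have hT2 : 0 ≤ (q * ((q - 1) * g2)) * b ^ 2 := by
        have : 0 ≤ q - 1 := by linarith
        positivity
      have hmin : min 1 (1/(p-1)) ≤ 1 := min_le_left _ _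
      calc lh * ‖v‖ ^ 2 ≤ (q * lam * m) * ‖v‖ ^ 2 := by
            rw [hlh]
            exact mul_le_mul_of_nonneg_right
              (mul_le_of_le_one_right (by positivity) hmin) (sq_nonneg _)
        _ = q * (m * (lam * ‖v‖ ^2)) := by ring
        _ ≤ q * (g1 * a) := mul_le_mul_of_nonneg_left hg1al hq.le
        _ = (q * g1) * a := by ring
        _ ≤ _ := le_add_of_nonneg_right hT2
    · have hqq : q * (q - 1) ≤ 0 := by nlinarith only [hq, hq1]
      have hT2 : q * (q - 1) * (p / (p-1)) * (g1 * a) ≤ (q * ((q - 1) * g2)) * b ^ 2 := by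
        calc q * (q - 1) * (p / (p-1)) * (g1 * a)
            = (q * (q - 1)) * ((p / (p-1)) * (g1 * a)) := by ring
          _ ≤ (q * (q - 1)) * (g2 * b ^ 2) := mul_le_mul_of_nonpos_left hle2 hqq
          _ = (q * ((q - 1) * g2)) * b ^ 2 := by ring
      have hsum : 1 + (q - 1) * (p / (p - 1)) = 1 / (p - 1) := by
        rw [hqdef]; field_simp; ring
      have hmin2 : min 1 (1/(p-1)) ≤ 1/(p-1) := min_le_right _ _
      calc lh * ‖v‖ ^ 2 ≤ ((q * lam * m) * (1/(p-1))) * ‖v‖ ^ 2 := by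
            rw [hlh]
            exact mul_le_mul_of_nonneg_right
              (mul_le_mul_of_nonneg_left hmin2 (by positivity)) (sq_nonneg _)
        _ = (q * (1/(p-1))) * (m * (lam * ‖v‖^2)) := by ring
        _ ≤ (q * (1/(p-1))) * (g1 * a) := mul_le_mul_of_nonneg_left hg1al (by positivity)
        _ = q * (g1 * a) * (1 + (q-1) * (p/(p-1))) := by rw [hsum]; ring
        _ = (q * g1) * a + q * (q-1) * (p/(p-1)) * (g1 * a) := by ring
        _ ≤ (q * g1) * a + (q * ((q - 1) * g2)) * b ^ 2 := add_le_add_right hT2 _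
  · have habs : q - 1 ≤ |q - 1| := le_abs_self _
    have h1 : (q - 1) * (g2 * b ^ 2) ≤ |q - 1| * (g2 * b ^2) :=
      mul_le_mul_of_nonneg_right habs (by positivity)
    have hT2u : (q * ((q - 1) * g2)) * b ^ 2 ≤ q * (|q - 1| * ((p / (p-1)) * (g1 * a))) := by
      calc (q * ((q - 1) * g2)) * b ^ 2 = q * ((q-1) * (g2 * b^2)) := by ring
        _ ≤ q * (|q-1| * (g2 * b^2)) := mul_le_mul_of_nonneg_left h1 hq.le
        _ ≤ q * (|q-1| * ((p / (p - 1)) * (g1 * a))) :=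
            mul_le_mul_of_nonneg_left
              (mul_le_mul_of_nonneg_left hle2 (abs_nonneg _)) hq.le
    have hco : (0:ℝ) ≤ q * (1 + |q-1| * (p/(p-1))) := by positivity
    calc (q * g1) * a + (q * ((q - 1) * g2)) * b ^ 2
        ≤ q * (g1 * a) + q * (|q - 1| * ((p / (p-1)) * (g1 * a))) := by
          refine add_le_add (le_of_eq (by ring)) hT2u
      _ = (q * (1 + |q-1| * (p/(p-1)))) * (g1 * a) := by ring
      _ ≤ (q * (1 + |q-1| * (p/(p-1)))) * (M * (Lam * ‖v‖^2)) :=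
          mul_le_mul_of_nonneg_left hg1au hco
      _ = Lh0 * ‖v‖ ^ 2 := by rw [hLh0]; ring
      _ ≤ Lh * ‖v‖ ^ 2 := mul_le_mul_of_nonneg_right (le_max_right _ _) (sq_nonneg _)
end

section
/- Under the hypotheses of the previous statement, for every θ > 0 the function H_θ(z) = (θ + H^{2/p}(z))^{p/2} satisfies λ̃(θ + H^{2/p}(z))^{(p-2)/2}|v|² ≤ (D²H_θ(z)v, v) ≤ Λ̃(θ + H^{2/p}(z))^{(p-2)/2}|v|², with λ̃, Λ̃ > 0 depending only on H and p but not on θ. -/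
open InnerProductSpace Real Filter Topology

variable {E : Type*} [NormedAddCommGroup E] [InnerProductSpace ℝ E] [CompleteSpace E]

local notation "⟪" x ", " y "⟫" => @inner ℝ _ _ x y

lemma inner_grad (f : E → ℝ) (x v : E) : ⟪gradient f x, v⟫ = fderiv ℝ f x v :=
  InnerProductSpace.toDual_symm_apply

lemma grad_fderiv_symm (f : E → ℝ) (hf : Differentiable ℝ f) {z : E}
    (hd : DifferentiableAt ℝ (gradient f) z) (u w : E) :
    ⟪fderiv ℝ (gradient f) z u, w⟫ = ⟪fderiv ℝ (gradient f) z w, u⟫ := by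
  set T := fderiv ℝ (gradient f) z
  let D : E →L[ℝ] (StrongDual ℝ E) :=
    (InnerProductSpace.toDual ℝ E).toContinuousLinearEquiv.toContinuousLinearMap
  have hDD : ∀ y : E, D (gradient f y) = fderiv ℝ f y := by
    intro y
    show (InnerProductSpace.toDual ℝ E) ((InnerProductSpace.toDual ℝ E).symm (fderiv ℝ f y)) = _
    simp
  have h2 : HasFDerivAt (fderiv ℝ f) (D.comp T) z := by
    have : HasFDerivAt (fun y => D (gradient f y)) (D.comp T) z :=
      D.hasFDerivAt.comp z hd.hasFDerivAt
    exact this.congr_of_eventuallyEq (Eventually.of_forall fun y => (hDD y).symm)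
  have hs := second_derivative_symmetric (f := f) (f' := fderiv ℝ f)
    (fun y => (hf y).hasFDerivAt) h2 u w
  have e : ∀ a b : E, (D.comp T) a b = ⟪T a, b⟫ := by
    intro a b
    show (InnerProductSpace.toDual ℝ E) (T a) b = _
    simp [InnerProductSpace.toDual_apply_apply]
  rw [e u w, e w u] at hs
  exact hs

section Hom
variable {p : ℝ} {H : E → ℝ}

lemma euler_id_s8 (hp : 1 < p) (hH : Differentiable ℝ H)
    (hhom : ∀ t > (0:ℝ), ∀ z, H (t • z) = t ^ p * H z) (z : E) :
    ⟪gradient H z, z⟫ = p * H z := by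
  have h1 : HasDerivAt (fun t : ℝ => H (t • z)) (fderiv ℝ H z z) 1 := by
    have hsmul : HasDerivAt (fun t : ℝ => t • z) z 1 := by
      simpa using (hasDerivAt_id (1:ℝ)).smul_const z
    have hz' : HasFDerivAt H (fderiv ℝ H z) ((1:ℝ) • z) := by
      rw [one_smul]; exact (hH z).hasFDerivAt
    exact hz'.comp_hasDerivAt 1 hsmul
  have h2 : HasDerivAt (fun t : ℝ => t ^ p * H z) (p * H z) 1 := by
    have := (Real.hasDerivAt_rpow_const (x := (1:ℝ)) (p := p)
      (Or.inl one_ne_zero)).mul_const (H z)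
    simpa using this
  have heq : (fun t : ℝ => H (t • z)) =ᶠ[𝓝 (1:ℝ)] fun t => t ^ p * H z := by
    filter_upwards [isOpen_Ioi.eventually_mem (show (1:ℝ) ∈ Set.Ioi 0 by norm_num)]
      with t ht using hhom t ht z
  have h3 : HasDerivAt (fun t : ℝ => H (t • z)) (p * H z) 1 := h2.congr_of_eventuallyEq heq
  have := h1.unique h3
  rw [inner_grad, this]

lemma grad_hom (hp : 1 < p) (hH : Differentiable ℝ H)
    (hhom : ∀ t > (0:ℝ), ∀ z, H (t • z) = t ^ p * H z)
    {t : ℝ} (ht : 0 < t) (z : E) :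
    gradient H (t • z) = t ^ (p - 1) • gradient H z := by
  have key : ∀ v, fderiv ℝ H (t • z) v = t ^ (p-1) * fderiv ℝ H z v := by
    intro v
    have hlin : HasFDerivAt (fun y : E => t • y) (t • ContinuousLinearMap.id ℝ E) z :=
      ((t • ContinuousLinearMap.id ℝ E).hasFDerivAt (x := z)).congr_of_eventuallyEq
        (Eventually.of_forall fun y => by simp)
    have h1 : HasFDerivAt (fun y : E => H (t • y))
        ((fderiv ℝ H (t • z)).comp (t • ContinuousLinearMap.id ℝ E)) z :=
      (hH (t • z)).hasFDerivAt.comp z hlin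
    have h2 : HasFDerivAt (fun y : E => t ^ p * H y) (t ^ p • fderiv ℝ H z) z :=
      (hH z).hasFDerivAt.const_smul (t ^ p)
    have heq : (fun y : E => H (t • y)) = fun y => t ^ p * H y := funext fun y => hhom t ht y
    rw [heq] at h1
    have := h1.unique h2
    have happ := congrArg (fun (L : E →L[ℝ] ℝ) => L v) this
    simp only [ContinuousLinearMap.comp_apply, ContinuousLinearMap.smul_apply,
      ContinuousLinearMap.id_apply] at happ
    have htp : t ^ p = t ^ (p - 1) * t := by
      rw [Real.rpow_sub ht, Real.rpow_one]; field_simp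
    rw [map_smul] at happ
    have hfd : t * fderiv ℝ H (t • z) v = (t ^ (p-1) * t) * fderiv ℝ H z v := by
      rw [← htp]; simpa [smul_eq_mul] using happ
    have ht' : t ≠ 0 := ne_of_gt ht
    field_simp at hfd
    nlinarith [hfd]
  apply ext_inner_right ℝ
  intro v
  rw [inner_grad, key v, real_inner_smul_left, inner_grad]

lemma d2_z (hp : 1 < p) (hH : Differentiable ℝ H)
    (hhom : ∀ t > (0:ℝ), ∀ z, H (t • z) = t ^ p * H z)
    {z : E} (hd : DifferentiableAt ℝ (gradient H) z) :
    fderiv ℝ (gradient H) z z = (p - 1) • gradient H z := by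
  have h1 : HasDerivAt (fun t : ℝ => gradient H (t • z)) (fderiv ℝ (gradient H) z z) 1 := by
    have hsmul : HasDerivAt (fun t : ℝ => t • z) z 1 := by
      simpa using (hasDerivAt_id (1:ℝ)).smul_const z
    have hz' : HasFDerivAt (gradient H) (fderiv ℝ (gradient H) z) ((1:ℝ) • z) := by
      rw [one_smul]; exact hd.hasFDerivAt
    exact hz'.comp_hasDerivAt 1 hsmul
  have h2 : HasDerivAt (fun t : ℝ => t ^ (p-1) • gradient H z) ((p-1) • gradient H z) 1 := by
    have := (Real.hasDerivAt_rpow_const (x := (1:ℝ)) (p := p - 1)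
      (Or.inl one_ne_zero)).smul_const (gradient H z)
    simpa using this
  have heq : (fun t : ℝ => gradient H (t • z)) =ᶠ[𝓝 (1:ℝ)]
      fun t => t ^ (p-1) • gradient H z := by
    filter_upwards [isOpen_Ioi.eventually_mem (show (1:ℝ) ∈ Set.Ioi 0 by norm_num)]
      with t ht using grad_hom hp hH hhom ht z
  exact h1.unique (h2.congr_of_eventuallyEq heq)

end Hom

section Scalar

lemma hasDerivAt_f {p θ s : ℝ} (hp : 1 < p) (hθ : 0 < θ) (hs : 0 < s) :
    HasDerivAt (fun u : ℝ => (θ + u ^ (2/p)) ^ (p/2))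
      ((θ + s ^ (2/p)) ^ ((p-2)/2) * s ^ ((2-p)/p)) s := by
  have hp0 : (0:ℝ) < p := by linarith
  have hA : 0 < θ + s ^ (2/p) := by positivity
  have hinner : HasDerivAt (fun u : ℝ => θ + u ^ (2/p)) ((2/p) * s ^ (2/p - 1)) s := by
    simpa using (Real.hasDerivAt_rpow_const (x := s) (p := 2/p) (Or.inl hs.ne')).const_add θ
  have houter : HasDerivAt (fun A : ℝ => A ^ (p/2)) ((p/2) * (θ + s ^ (2/p)) ^ (p/2 - 1))
      (θ + s ^ (2/p)) :=
    Real.hasDerivAt_rpow_const (Or.inl hA.ne')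
  have := houter.comp s hinner
  refine this.congr_deriv ?_
  symm
  rw [show p/2 - 1 = (p-2)/2 by ring, show (2:ℝ)/p - 1 = (2-p)/p by field_simp]
  field_simp

lemma hasDerivAt_k {p θ s : ℝ} (hp : 1 < p) (hθ : 0 < θ) (hs : 0 < s) :
    HasDerivAt (fun u : ℝ => (θ + u ^ (2/p)) ^ ((p-2)/2) * u ^ ((2-p)/p))
      (((2-p)/p) * θ * s ^ ((2-2*p)/p) * (θ + s ^ (2/p)) ^ ((p-4)/2)) s := by
  have hp0 : (0:ℝ) < p := by linarith
  have hA : 0 < θ + s ^ (2/p) := by positivity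
  set A := θ + s ^ (2/p) with hAdef
  have hinner : HasDerivAt (fun u : ℝ => θ + u ^ (2/p)) ((2/p) * s ^ (2/p - 1)) s := by
    simpa using (Real.hasDerivAt_rpow_const (x := s) (p := 2/p) (Or.inl hs.ne')).const_add θ
  have h1 : HasDerivAt (fun u : ℝ => (θ + u ^ (2/p)) ^ ((p-2)/2))
      (((p-2)/2) * A ^ ((p-2)/2 - 1) * ((2/p) * s ^ (2/p - 1))) s :=
    by have := (Real.hasDerivAt_rpow_const (x := A) (p := (p-2)/2) (Or.inl hA.ne')).comp s hinner; exact this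
  have h2 : HasDerivAt (fun u : ℝ => u ^ ((2-p)/p)) (((2-p)/p) * s ^ ((2-p)/p - 1)) s :=
    Real.hasDerivAt_rpow_const (Or.inl hs.ne')
  have := h1.mul h2
  refine this.congr_deriv ?_
  symm
  have e1 : A ^ ((p-2)/2 - 1) = A ^ ((p-4)/2) := by norm_num; ring_nf
  have e2 : s ^ (2/p - 1) * s ^ ((2-p)/p) = s ^ ((4-2*p)/p) := by
    rw [← Real.rpow_add hs]; congr 1; field_simp; ring
  have e3 : s ^ ((4-2*p)/p) = s ^ ((2-2*p)/p) * s ^ (2/p) := by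
    rw [← Real.rpow_add hs]; congr 1; field_simp; ring
  have e4 : s ^ ((2-p)/p - 1) = s ^ ((2-2*p)/p) := by congr 1; field_simp; ring
  have e5 : A ^ ((p-2)/2) = A ^ ((p-4)/2) * A := by
    rw [show (p-2)/2 = (p-4)/2 + 1 by ring, Real.rpow_add hA, Real.rpow_one]
  calc ((2-p)/p) * θ * s ^ ((2-2*p)/p) * A ^ ((p-4)/2)
      = ((p-2)/2) * A ^ ((p-4)/2) * ((2/p) * (s ^ ((2-2*p)/p) * s ^ (2/p)))
        + (A ^ ((p-4)/2) * A) * (((2-p)/p) * s ^ ((2-2*p)/p)) := by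
        rw [hAdef]; ring
    _ = ((p-2)/2) * A ^ ((p-2)/2 - 1) * ((2/p) * s ^ (2/p - 1)) * s ^ ((2-p)/p)
        + A ^ ((p-2)/2) * (((2-p)/p) * s ^ ((2-p)/p - 1)) := by
        rw [e1, ← e3, ← e2, e4, e5]; ring

end Scalar

section Formula
variable {p θ : ℝ} {H : E → ℝ}

lemma gradG_off_zero (hp : 1 < p) (hθ : 0 < θ) (hH : Differentiable ℝ H)
    (hpos : ∀ y : E, y ≠ 0 → 0 < H y) {y : E} (hy : y ≠ 0) :
    HasGradientAt (fun w => (θ + H w ^ (2/p)) ^ (p/2))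
      (((θ + H y ^ (2/p)) ^ ((p-2)/2) * (H y) ^ ((2-p)/p)) • gradient H y) y := by
  have hF : HasFDerivAt (fun w => (θ + H w ^ (2/p)) ^ (p/2))
      (((θ + H y ^ (2/p)) ^ ((p-2)/2) * (H y) ^ ((2-p)/p)) • fderiv ℝ H y) y :=
    (hasDerivAt_f hp hθ (hpos y hy)).comp_hasFDerivAt y (hH y).hasFDerivAt
  rw [hasGradientAt_iff_hasFDerivAt]
  refine hF.congr_fderiv ?_
  symm
  rw [map_smul]
  congr 1
  exact (InnerProductSpace.toDual ℝ E).apply_symm_apply _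

lemma inner_formula (hp : 1 < p) (hθ : 0 < θ) (hH : Differentiable ℝ H)
    (hpos : ∀ y : E, y ≠ 0 → 0 < H y) {z : E} (hz : z ≠ 0)
    (hd : DifferentiableAt ℝ (gradient H) z) (v : E) :
    ⟪fderiv ℝ (gradient (fun w => (θ + H w ^ (2/p)) ^ (p/2))) z v, v⟫ =
      (((2-p)/p) * θ * (H z) ^ ((2-2*p)/p) * (θ + (H z) ^ (2/p)) ^ ((p-4)/2))
          * ⟪gradient H z, v⟫ ^ 2
      + ((θ + (H z) ^ (2/p)) ^ ((p-2)/2) * (H z) ^ ((2-p)/p))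
          * ⟪fderiv ℝ (gradient H) z v, v⟫ := by
  set c : E → ℝ := fun y => (θ + H y ^ (2/p)) ^ ((p-2)/2) * (H y) ^ ((2-p)/p) with hc
  have hcd : HasFDerivAt c
      ((((2-p)/p) * θ * (H z) ^ ((2-2*p)/p) * (θ + (H z) ^ (2/p)) ^ ((p-4)/2))
        • fderiv ℝ H z) z :=
    (hasDerivAt_k hp hθ (hpos z hz)).comp_hasFDerivAt z (hH z).hasFDerivAt
  have hsm : HasFDerivAt (fun y => c y • gradient H y)
      (c z • fderiv ℝ (gradient H) z +
        ((((2-p)/p) * θ * (H z) ^ ((2-2*p)/p) * (θ + (H z) ^ (2/p)) ^ ((p-4)/2))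
          • fderiv ℝ H z).smulRight (gradient H z)) z :=
    hcd.smul hd.hasFDerivAt
  have hev : gradient (fun w => (θ + H w ^ (2/p)) ^ (p/2)) =ᶠ[𝓝 z]
      fun y => c y • gradient H y := by
    filter_upwards [isOpen_compl_singleton.eventually_mem hz] with y hy
    exact (gradG_off_zero hp hθ hH hpos hy).gradient
  have hfd : fderiv ℝ (gradient (fun w => (θ + H w ^ (2/p)) ^ (p/2))) z =
      fderiv ℝ (fun y => c y • gradient H y) z := hev.fderiv_eq
  rw [hfd, hsm.fderiv]
  simp only [ContinuousLinearMap.add_apply, ContinuousLinearMap.smul_apply,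
    ContinuousLinearMap.smulRight_apply, ContinuousLinearMap.coe_smul', Pi.smul_apply,
    smul_eq_mul]
  rw [inner_add_left, real_inner_smul_left, real_inner_smul_left]
  rw [show fderiv ℝ H z v = ⟪gradient H z, v⟫ from (inner_grad H z v).symm]
  ring

end Formula

section Bounds
variable {p lam Lam θ : ℝ} {H : E → ℝ}

set_option maxHeartbeats 1000000 in
lemma bounds_ne (hp : 1 < p) (hlam : 0 < lam) (hLam : lam ≤ Lam) (hθ : 0 < θ)
    (hH : Differentiable ℝ H) (hpos : ∀ y : E, y ≠ 0 → 0 < H y)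
    (hhom : ∀ t > (0:ℝ), ∀ z, H (t • z) = t ^ p * H z)
    (hd2 : ∀ z : E, z ≠ 0 → DifferentiableAt ℝ (gradient H) z)
    (hell : ∀ z : E, z ≠ 0 → ∀ v,
      lam * ‖z‖ ^ (p - 2) * ‖v‖ ^ 2 ≤ ⟪fderiv ℝ (gradient H) z v, v⟫ ∧
      ⟪fderiv ℝ (gradient H) z v, v⟫ ≤ Lam * ‖z‖ ^ (p - 2) * ‖v‖ ^ 2)
    {z : E} (hz : z ≠ 0) (v : E) :
    lam * (min ((lam/(p*(p-1))) ^ ((2-p)/p)) ((Lam/(p*(p-1))) ^ ((2-p)/p))) / p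
        * (θ + H z ^ (2/p)) ^ ((p-2)/2) * ‖v‖ ^ 2 ≤
      ⟪fderiv ℝ (gradient (fun w => (θ + H w ^ (2/p)) ^ (p/2))) z v, v⟫ ∧
    ⟪fderiv ℝ (gradient (fun w => (θ + H w ^ (2/p)) ^ (p/2))) z v, v⟫ ≤
      Lam * (max ((lam/(p*(p-1))) ^ ((2-p)/p)) ((Lam/(p*(p-1))) ^ ((2-p)/p))) * p / (p-1)
        * (θ + H z ^ (2/p)) ^ ((p-2)/2) * ‖v‖ ^ 2 := by
  have hp0 : (0:ℝ) < p := by linarith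
  have hp1 : (0:ℝ) < p - 1 := by linarith
  have hpp1 : (0:ℝ) < p * (p - 1) := mul_pos hp0 hp1
  have hLam0 : 0 < Lam := lt_of_lt_of_le hlam hLam
  set s := H z with hsdef
  have hs : 0 < s := hpos z hz
  set n := ‖z‖ with hndef
  have hn : 0 < n := norm_pos_iff.mpr hz
  set A := θ + s ^ (2/p) with hAdef
  have hs2p : 0 < s ^ (2/p) := Real.rpow_pos_of_pos hs _
  have hA : 0 < A := by positivity
  set W := A ^ ((p-2)/2) with hWdef
  have hW : 0 < W := Real.rpow_pos_of_pos hA _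
  have hsr : 0 < s ^ ((2-p)/p) := Real.rpow_pos_of_pos hs _
  set T := fderiv ℝ (gradient H) z with hTdef
  set Bvv := ⟪T v, v⟫ with hBvvdef
  set G := ⟪gradient H z, v⟫ with hGdef
  set k' := ((2-p)/p) * θ * s ^ ((2-2*p)/p) * A ^ ((p-4)/2) with hk'def
  -- the formula
  have hQ : ⟪fderiv ℝ (gradient (fun w => (θ + H w ^ (2/p)) ^ (p/2))) z v, v⟫
      = k' * G ^ 2 + (W * s ^ ((2-p)/p)) * Bvv :=
    inner_formula hp hθ hH hpos hz (hd2 z hz) v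
  set k := W * s ^ ((2-p)/p) with hkdef
  have hk : 0 < k := by positivity
  -- Euler-type identities
  have heuler : ⟪gradient H z, z⟫ = p * s := euler_id_s8 hp hH hhom z
  have hTz : T z = (p-1) • gradient H z := d2_z hp hH hhom (hd2 z hz)
  have hBzz : ⟪T z, z⟫ = p * (p-1) * s := by
    rw [hTz, real_inner_smul_left, heuler]; ring
  have hBzv : ⟪T z, v⟫ = (p-1) * G := by rw [hTz, real_inner_smul_left]
  have hsymm : ∀ u w : E, ⟪T u, w⟫ = ⟪T w, u⟫ := fun u w =>
    grad_fderiv_symm H hH (hd2 z hz) u w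
  -- ellipticity at v
  have hellv := hell z hz v
  have hBvv0 : 0 ≤ Bvv := le_trans (by positivity) hellv.1
  -- Cauchy-Schwarz for the second-derivative form
  have hCS : (p-1) * G ^ 2 ≤ p * s * Bvv := by
    have hquad : ∀ t : ℝ, 0 ≤ Bvv * (t * t) + (2 * ((p-1) * G)) * t + p * (p-1) * s := by
      intro t
      have h0 : 0 ≤ ⟪T (z + t • v), z + t • v⟫ :=
        le_trans (by positivity) (hell z hz (z + t • v)).1
      have hexp : ⟪T (z + t • v), z + t • v⟫
          = ⟪T z, z⟫ + t * ⟪T z, v⟫ + t * ⟪T v, z⟫ + t * t * Bvv := by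
        rw [map_add, map_smul]
        simp only [inner_add_left, inner_add_right, inner_smul_left, inner_smul_right,
          real_inner_smul_left, real_inner_smul_right, RCLike.conj_to_real]
        ring
      rw [hexp, hBzz, hBzv, hsymm v z, hBzv] at h0
      linarith
    have hd := discrim_le_zero hquad
    rw [discrim] at hd
    nlinarith [hd, hs, hp1]
  -- comparison of H with the norm
  have hzpow : n ^ (p-2) * ‖z‖ ^ 2 = n ^ p := by
    rw [show (‖z‖:ℝ) ^ (2:ℕ) = n ^ ((2:ℕ):ℝ) from (Real.rpow_natCast n 2).symm,
      ← Real.rpow_add hn]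
    norm_num
  have hnp : 0 < n ^ p := Real.rpow_pos_of_pos hn p
  have hellz := hell z hz z
  have hF1 : lam * n ^ p ≤ ⟪T z, z⟫ ∧ ⟪T z, z⟫ ≤ Lam * n ^ p := by
    constructor
    · calc lam * n ^ p = lam * n ^ (p-2) * ‖z‖ ^ 2 := by rw [mul_assoc, hzpow]
        _ ≤ _ := hellz.1
    · calc ⟪T z, z⟫ ≤ Lam * n ^ (p-2) * ‖z‖ ^ 2 := hellz.2
        _ = Lam * n ^ p := by rw [mul_assoc, hzpow]
  set m := s / n ^ p with hmdef
  have hmpos : 0 < m := div_pos hs hnp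
  have hms : m * n ^ p = s := by
    rw [hmdef]; field_simp
  have hmc1 : lam / (p*(p-1)) ≤ m := by
    rw [hmdef, div_le_div_iff₀ hpp1 hnp]
    nlinarith [hF1.1, hBzz]
  have hmc2 : m ≤ Lam / (p*(p-1)) := by
    rw [hmdef, div_le_div_iff₀ hnp hpp1]
    nlinarith [hF1.2, hBzz]
  have hc1 : (0:ℝ) < lam / (p*(p-1)) := by positivity
  have hc2 : (0:ℝ) < Lam / (p*(p-1)) := by positivity
  set μ := min ((lam/(p*(p-1))) ^ ((2-p)/p)) ((Lam/(p*(p-1))) ^ ((2-p)/p)) with hμdef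
  set M := max ((lam/(p*(p-1))) ^ ((2-p)/p)) ((Lam/(p*(p-1))) ^ ((2-p)/p)) with hMdef
  have hμ : 0 < μ := lt_min (Real.rpow_pos_of_pos hc1 _) (Real.rpow_pos_of_pos hc2 _)
  have hmr : μ ≤ m ^ ((2-p)/p) ∧ m ^ ((2-p)/p) ≤ M := by
    rcases le_or_gt p 2 with h2 | h2
    · have hrpos : 0 ≤ (2-p)/p := div_nonneg (by linarith) hp0.le
      constructor
      · exact le_trans (min_le_left _ _) (Real.rpow_le_rpow hc1.le hmc1 hrpos)
      · exact le_trans (Real.rpow_le_rpow hmpos.le hmc2 hrpos) (le_max_right _ _)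
    · have hrneg : (2-p)/p ≤ 0 := by
        apply div_nonpos_of_nonpos_of_nonneg <;> linarith
      constructor
      · exact le_trans (min_le_right _ _) (Real.rpow_le_rpow_of_nonpos hmpos hmc2 hrneg)
      · exact le_trans (Real.rpow_le_rpow_of_nonpos hc1 hmc1 hrneg) (le_max_left _ _)
  have hsrn : s ^ ((2-p)/p) * n ^ (p-2) = m ^ ((2-p)/p) := by
    have h1 : s ^ ((2-p)/p) = m ^ ((2-p)/p) * (n ^ p) ^ ((2-p)/p) := by
      rw [← Real.mul_rpow hmpos.le hnp.le, hms]
    have h2 : (n ^ p) ^ ((2-p)/p) = n ^ (2-p) := by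
      rw [← Real.rpow_mul hn.le]
      congr 1
      field_simp
    rw [h1, h2, mul_assoc, ← Real.rpow_add hn]
    norm_num
  have hkn : k * n ^ (p-2) = W * m ^ ((2-p)/p) := by
    rw [hkdef, mul_assoc, hsrn]
  have hmrpos : 0 < m ^ ((2-p)/p) := Real.rpow_pos_of_pos hmpos _
  -- bracket identities
  have hWsplit : W = A ^ ((p-4)/2) * A := by
    rw [hWdef, show (p-2)/2 = (p-4)/2 + 1 by ring, Real.rpow_add hA, Real.rpow_one]
  have hssplit : s ^ ((2-2*p)/p) * s = s ^ ((2-p)/p) := by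
    nth_rewrite 2 [← Real.rpow_one s]
    rw [← Real.rpow_add hs]
    congr 1
    field_simp
    ring
  set brk := s ^ ((2-p)/p) * A ^ ((p-4)/2) * ((p-1) * s ^ (2/p) + θ) with hbrkdef
  have hbrk0 : 0 ≤ brk := by
    have h1 : 0 ≤ (p-1) * s ^ (2/p) + θ := by positivity
    positivity
  have hsum : k' * (p * s) + (p-1) * k = brk := by
    have e1 : k' * (p * s) = (2-p) * θ * s ^ ((2-p)/p) * A ^ ((p-4)/2) := by
      rw [hk'def, ← hssplit]
      field_simp
    rw [e1, hkdef, hWsplit, hbrkdef, hAdef]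
    ring
  have hbrkk : brk - k = s ^ ((2-p)/p) * A ^ ((p-4)/2) * s ^ (2/p) * (p-2) := by
    rw [hkdef, hWsplit, hbrkdef, hAdef]
    ring
  have hWv : (0:ℝ) ≤ W * ‖v‖ ^ 2 := by positivity
  have hkform : ∀ c : ℝ, k * (c * n ^ (p-2) * ‖v‖ ^ 2) = (c * m ^ ((2-p)/p)) * (W * ‖v‖ ^ 2) := by
    intro c
    rw [show k * (c * n ^ (p-2) * ‖v‖ ^ 2) = c * (k * n ^ (p-2)) * ‖v‖ ^ 2 by ring, hkn]
    ring
  have hint1 : lam * μ ≤ lam * m ^ ((2-p)/p) := mul_le_mul_of_nonneg_left hmr.1 hlam.le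
  have hint2 : Lam * m ^ ((2-p)/p) ≤ Lam * M := mul_le_mul_of_nonneg_left hmr.2 hLam0.le
  have hposlm : (0:ℝ) ≤ lam * m ^ ((2-p)/p) := le_of_lt (mul_pos hlam hmrpos)
  have hposLm : (0:ℝ) ≤ Lam * m ^ ((2-p)/p) := le_of_lt (mul_pos hLam0 hmrpos)
  have hposLM : (0:ℝ) ≤ Lam * M :=
    le_of_lt (mul_pos hLam0 (lt_max_of_lt_left (Real.rpow_pos_of_pos hc1 _)))
  constructor
  · -- lower bound
    rw [hQ]
    rcases le_or_gt p 2 with h2 | h2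
    · -- p ≤ 2 : k' ≥ 0, drop the first term
      have hk'0 : 0 ≤ k' := by
        rw [hk'def]
        have h1 : (0:ℝ) ≤ (2-p)/p := div_nonneg (by linarith) hp0.le
        have ha : (0:ℝ) ≤ (2-p)/p * θ := mul_nonneg h1 hθ.le
        have hb : (0:ℝ) ≤ (2-p)/p * θ * s ^ ((2-2*p)/p) :=
          mul_nonneg ha (Real.rpow_nonneg hs.le _)
        exact mul_nonneg hb (Real.rpow_nonneg hA.le _)
      have hc : lam * μ / p ≤ lam * m ^ ((2-p)/p) := by
        rw [div_le_iff₀ hp0]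
        have hint3 : lam * m ^ ((2-p)/p) * 1 ≤ lam * m ^ ((2-p)/p) * p :=
          mul_le_mul_of_nonneg_left (by linarith) hposlm
        linarith only [hint1, hint3]
      calc lam * μ / p * W * ‖v‖ ^ 2 = (lam * μ / p) * (W * ‖v‖ ^ 2) := by ring
        _ ≤ (lam * m ^ ((2-p)/p)) * (W * ‖v‖ ^ 2) := mul_le_mul_of_nonneg_right hc hWv
        _ = k * (lam * n ^ (p-2) * ‖v‖ ^ 2) := (hkform lam).symm
        _ ≤ k * Bvv := mul_le_mul_of_nonneg_left hellv.1 hk.le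
        _ ≤ k' * G ^ 2 + k * Bvv := le_add_of_nonneg_left (mul_nonneg hk'0 (sq_nonneg G))
    · -- p > 2 : k' ≤ 0, refined bound
      have hk'0 : k' ≤ 0 := by
        rw [hk'def]
        have h1 : (2-p)/p ≤ 0 := by
          apply div_nonpos_of_nonpos_of_nonneg <;> linarith
        have ha : (2-p)/p * θ ≤ 0 := mul_nonpos_of_nonpos_of_nonneg h1 hθ.le
        have hb : (2-p)/p * θ * s ^ ((2-2*p)/p) ≤ 0 :=
          mul_nonpos_of_nonpos_of_nonneg ha (Real.rpow_nonneg hs.le _)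
        exact mul_nonpos_of_nonpos_of_nonneg hb (Real.rpow_nonneg hA.le _)
      have h4 : 0 ≤ k' * ((p-1) * G ^ 2 - p * s * Bvv) := by
        have := mul_nonneg (neg_nonneg.2 hk'0)
          (neg_nonneg.2 (show (p-1) * G ^ 2 - p * s * Bvv ≤ 0 by linarith))
        rw [neg_mul_neg] at this
        exact this
      have hdiff : (p-1) * (k' * G ^ 2 + k * Bvv) - brk * Bvv
          = k' * ((p-1) * G ^ 2 - p * s * Bvv) := by
        linear_combination Bvv * hsum
      have hbk : k ≤ brk := by
        have hnn : (0:ℝ) ≤ s ^ ((2-p)/p) * A ^ ((p-4)/2) * s ^ (2/p) :=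
          mul_nonneg (mul_nonneg hsr.le (Real.rpow_nonneg hA.le _)) hs2p.le
        nlinarith only [hbrkk, hnn, h2]
      have hchain : (lam * m ^ ((2-p)/p)) * (W * ‖v‖ ^ 2) ≤ brk * Bvv :=
        calc (lam * m ^ ((2-p)/p)) * (W * ‖v‖ ^ 2)
            = k * (lam * n ^ (p-2) * ‖v‖ ^ 2) := (hkform lam).symm
          _ ≤ k * Bvv := mul_le_mul_of_nonneg_left hellv.1 hk.le
          _ ≤ brk * Bvv := mul_le_mul_of_nonneg_right hbk hBvv0
      have hgoal : (p-1) * (lam * μ / p * W * ‖v‖ ^ 2) ≤ (p-1) * (k' * G ^ 2 + k * Bvv) := by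
        have hc : (p-1) * (lam * μ / p) ≤ lam * m ^ ((2-p)/p) := by
          rw [show (p-1) * (lam * μ / p) = (p-1) * (lam * μ) / p by ring, div_le_iff₀ hp0]
          have hint4 : lam * μ * p ≤ lam * m ^ ((2-p)/p) * p :=
            mul_le_mul_of_nonneg_right hint1 hp0.le
          have hint5 : (0:ℝ) ≤ lam * μ := le_of_lt (mul_pos hlam hμ)
          nlinarith only [hint4, hint5, hp0, hp1]
        calc (p-1) * (lam * μ / p * W * ‖v‖ ^ 2)
            = ((p-1) * (lam * μ / p)) * (W * ‖v‖ ^ 2) := by ring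
          _ ≤ (lam * m ^ ((2-p)/p)) * (W * ‖v‖ ^ 2) := mul_le_mul_of_nonneg_right hc hWv
          _ ≤ brk * Bvv := hchain
          _ ≤ (p-1) * (k' * G ^ 2 + k * Bvv) := by linarith only [hdiff, h4]
      exact (mul_le_mul_iff_of_pos_left hp1).mp hgoal
  · -- upper bound
    rw [hQ]
    rcases le_or_gt p 2 with h2 | h2
    · -- p ≤ 2 : k' ≥ 0, refined bound
      have hk'0 : 0 ≤ k' := by
        rw [hk'def]
        have h1 : (0:ℝ) ≤ (2-p)/p := div_nonneg (by linarith) hp0.le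
        have ha : (0:ℝ) ≤ (2-p)/p * θ := mul_nonneg h1 hθ.le
        have hb : (0:ℝ) ≤ (2-p)/p * θ * s ^ ((2-2*p)/p) :=
          mul_nonneg ha (Real.rpow_nonneg hs.le _)
        exact mul_nonneg hb (Real.rpow_nonneg hA.le _)
      have h4 : k' * ((p-1) * G ^ 2 - p * s * Bvv) ≤ 0 :=
        mul_nonpos_of_nonneg_of_nonpos hk'0 (by linarith)
      have hdiff : (p-1) * (k' * G ^ 2 + k * Bvv) - brk * Bvv
          = k' * ((p-1) * G ^ 2 - p * s * Bvv) := by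
        linear_combination Bvv * hsum
      have hbk : brk ≤ k := by
        have hnn : (0:ℝ) ≤ s ^ ((2-p)/p) * A ^ ((p-4)/2) * s ^ (2/p) :=
          mul_nonneg (mul_nonneg hsr.le (Real.rpow_nonneg hA.le _)) hs2p.le
        nlinarith only [hbrkk, hnn, h2]
      have hchain : brk * Bvv ≤ (Lam * m ^ ((2-p)/p)) * (W * ‖v‖ ^ 2) :=
        calc brk * Bvv ≤ k * Bvv := mul_le_mul_of_nonneg_right hbk hBvv0
          _ ≤ k * (Lam * n ^ (p-2) * ‖v‖ ^ 2) := mul_le_mul_of_nonneg_left hellv.2 hk.le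
          _ = (Lam * m ^ ((2-p)/p)) * (W * ‖v‖ ^ 2) := hkform Lam
      have hgoal : (p-1) * (k' * G ^ 2 + k * Bvv)
          ≤ (p-1) * (Lam * M * p / (p-1) * W * ‖v‖ ^ 2) := by
        have hRHS : (p-1) * (Lam * M * p / (p-1) * W * ‖v‖ ^ 2)
            = (Lam * M * p) * (W * ‖v‖ ^ 2) := by
          field_simp
        have hc : Lam * m ^ ((2-p)/p) ≤ Lam * M * p := by
          have hint6 : Lam * M * 1 ≤ Lam * M * p :=
            mul_le_mul_of_nonneg_left (by linarith) hposLM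
          linarith only [hint2, hint6]
        calc (p-1) * (k' * G ^ 2 + k * Bvv) ≤ brk * Bvv := by linarith only [hdiff, h4]
          _ ≤ (Lam * m ^ ((2-p)/p)) * (W * ‖v‖ ^ 2) := hchain
          _ ≤ (Lam * M * p) * (W * ‖v‖ ^ 2) := mul_le_mul_of_nonneg_right hc hWv
          _ = (p-1) * (Lam * M * p / (p-1) * W * ‖v‖ ^ 2) := hRHS.symm
      exact (mul_le_mul_iff_of_pos_left hp1).mp hgoal
    · -- p > 2 : k' ≤ 0, crude bound
      have hk'0 : k' ≤ 0 := by
        rw [hk'def]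
        have h1 : (2-p)/p ≤ 0 := by
          apply div_nonpos_of_nonpos_of_nonneg <;> linarith
        have ha : (2-p)/p * θ ≤ 0 := mul_nonpos_of_nonpos_of_nonneg h1 hθ.le
        have hb : (2-p)/p * θ * s ^ ((2-2*p)/p) ≤ 0 :=
          mul_nonpos_of_nonpos_of_nonneg ha (Real.rpow_nonneg hs.le _)
        exact mul_nonpos_of_nonpos_of_nonneg hb (Real.rpow_nonneg hA.le _)
      have hc : Lam * m ^ ((2-p)/p) ≤ Lam * M * p / (p-1) := by
        rw [le_div_iff₀ hp1]
        have hint7 : Lam * m ^ ((2-p)/p) * (p-1) ≤ Lam * M * (p-1) :=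
          mul_le_mul_of_nonneg_right hint2 hp1.le
        have hint8 : Lam * M * (p-1) ≤ Lam * M * p :=
          mul_le_mul_of_nonneg_left (by linarith) hposLM
        linarith only [hint7, hint8]
      calc k' * G ^ 2 + k * Bvv
          ≤ k * Bvv :=
            add_le_of_nonpos_left (mul_nonpos_of_nonpos_of_nonneg hk'0 (sq_nonneg G))
        _ ≤ k * (Lam * n ^ (p-2) * ‖v‖ ^ 2) := mul_le_mul_of_nonneg_left hellv.2 hk.le
        _ = (Lam * m ^ ((2-p)/p)) * (W * ‖v‖ ^ 2) := hkform Lam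
        _ ≤ (Lam * M * p / (p-1)) * (W * ‖v‖ ^ 2) := mul_le_mul_of_nonneg_right hc hWv
        _ = Lam * M * p / (p-1) * W * ‖v‖ ^ 2 := by ring

end Bounds

section DerivZero
open Set

lemma deriv0_ge {φ φd : ℝ → ℝ} (hφ : ∀ t, HasDerivAt φ (φd t) t) {c : ℝ}
    (hb : ∀ᶠ t in 𝓝[>] (0:ℝ), c ≤ φd t) : c ≤ φd 0 := by
  obtain ⟨u, hu, hsub⟩ := mem_nhdsGT_iff_exists_Ioo_subset.mp hb
  have hu0 : (0:ℝ) < u := hu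
  have hφdiff : Differentiable ℝ φ := fun t => (hφ t).differentiableAt
  have hslope : Tendsto (slope φ 0) (𝓝[>] 0) (𝓝 (φd 0)) :=
    (hasDerivAt_iff_tendsto_slope.mp (hφ 0)).mono_left
      (nhdsWithin_mono 0 (fun x hx => ne_of_gt hx))
  refine ge_of_tendsto hslope ?_
  filter_upwards [Ioo_mem_nhdsGT_of_mem (Set.mem_Ico.mpr ⟨le_refl (0:ℝ), hu0⟩)] with t ht
  have ht0 : 0 < t := ht.1
  have hmono : MonotoneOn (fun x => φ x - c * x) (Icc 0 t) := by
    apply monotoneOn_of_deriv_nonneg (convex_Icc 0 t)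
    · exact (hφdiff.sub ((differentiable_id).const_mul c)).continuous.continuousOn
    · exact (hφdiff.sub ((differentiable_id).const_mul c)).differentiableOn
    · intro x hx
      rw [interior_Icc] at hx
      have hdx : HasDerivAt (fun x => φ x - c * x) (φd x - c * 1) x :=
        (hφ x).sub ((hasDerivAt_id x).const_mul c)
      rw [hdx.deriv]
      have : c ≤ φd x := hsub ⟨hx.1, lt_of_lt_of_le hx.2 (le_of_lt ht.2)⟩
      linarith
  have h01 := hmono (Set.mem_Icc.mpr ⟨le_refl 0, ht0.le⟩)
    (Set.mem_Icc.mpr ⟨ht0.le, le_refl t⟩) ht0.le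
  simp only [mul_zero] at h01
  rw [slope_def_field, sub_zero, div_eq_inv_mul, le_inv_mul_iff₀ ht0]
  linarith [h01]

lemma deriv0_le {φ φd : ℝ → ℝ} (hφ : ∀ t, HasDerivAt φ (φd t) t) {c : ℝ}
    (hb : ∀ᶠ t in 𝓝[>] (0:ℝ), φd t ≤ c) : φd 0 ≤ c := by
  have := deriv0_ge (φ := fun t => -φ t) (φd := fun t => -φd t)
    (fun t => (hφ t).neg) (c := -c) (by filter_upwards [hb] with t ht; linarith)
  simpa using this

end DerivZero

section Zero
variable {p lam Lam θ : ℝ} {H : E → ℝ}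

lemma H_le (hp : 1 < p) (hH : Differentiable ℝ H) (h0 : H 0 = 0)
    (hhom : ∀ t > (0:ℝ), ∀ z, H (t • z) = t ^ p * H z)
    (hd2 : ∀ z : E, z ≠ 0 → DifferentiableAt ℝ (gradient H) z)
    (hell : ∀ z : E, z ≠ 0 → ∀ v,
      lam * ‖z‖ ^ (p - 2) * ‖v‖ ^ 2 ≤ ⟪fderiv ℝ (gradient H) z v, v⟫ ∧
      ⟪fderiv ℝ (gradient H) z v, v⟫ ≤ Lam * ‖z‖ ^ (p - 2) * ‖v‖ ^ 2) (y : E) :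
    p * (p-1) * H y ≤ Lam * ‖y‖ ^ p := by
  rcases eq_or_ne y 0 with rfl | hy
  · rw [h0, norm_zero, Real.zero_rpow (by positivity : p ≠ 0)]
    simp
  · have hn : 0 < ‖y‖ := norm_pos_iff.mpr hy
    have hTz : fderiv ℝ (gradient H) y y = (p-1) • gradient H y := d2_z hp hH hhom (hd2 y hy)
    have hBzz : ⟪fderiv ℝ (gradient H) y y, y⟫ = p * (p-1) * H y := by
      rw [hTz, real_inner_smul_left, euler_id_s8 hp hH hhom y]; ring
    have h2 := (hell y hy y).2
    rw [hBzz] at h2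
    calc p * (p-1) * H y ≤ Lam * ‖y‖ ^ (p-2) * ‖y‖ ^ 2 := h2
      _ = Lam * ‖y‖ ^ p := by
        rw [mul_assoc, show (‖y‖:ℝ) ^ (2:ℕ) = ‖y‖ ^ ((2:ℕ):ℝ) from (Real.rpow_natCast _ 2).symm,
          ← Real.rpow_add hn]
        norm_num

lemma gradG_zero (hp : 1 < p) (hθ : 0 < θ) (hnn : ∀ y : E, 0 ≤ H y) (h0 : H 0 = 0)
    {C : ℝ} (hC : 0 ≤ C) (hub : ∀ y : E, H y ≤ C * ‖y‖ ^ p) :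
    gradient (fun w => (θ + H w ^ (2/p)) ^ (p/2)) 0 = 0 := by
  have hp0 : (0:ℝ) < p := by linarith
  set Cb := (p/2) * max (θ ^ (p/2-1)) ((θ+1) ^ (p/2-1)) with hCbdef
  have hCb : 0 ≤ Cb := by
    apply mul_nonneg (by positivity)
    exact le_trans (Real.rpow_nonneg hθ.le _) (le_max_left _ _)
  have key : ∀ x : ℝ, 0 ≤ x → x ≤ 1 → (θ+x) ^ (p/2) - θ ^ (p/2) ≤ Cb * x := by
    intro x hx0 hx1
    rcases eq_or_lt_of_le hx0 with rfl | hx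
    · simp
    · have hcont : ContinuousOn (fun u : ℝ => u ^ (p/2)) (Set.Icc θ (θ+x)) := by
        apply ContinuousOn.rpow_const continuousOn_id
        intro u hu
        exact Or.inl (ne_of_gt (lt_of_lt_of_le hθ hu.1))
      have hderiv : ∀ u ∈ Set.Ioo θ (θ+x),
          HasDerivAt (fun u : ℝ => u ^ (p/2)) ((p/2) * u ^ (p/2-1)) u := by
        intro u hu
        have hu0 : u ≠ 0 := ne_of_gt (lt_trans hθ hu.1)
        simpa [mul_comm] using Real.hasDerivAt_rpow_const (x := u) (p := p/2) (Or.inl hu0)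
      obtain ⟨c, hc, hceq⟩ := exists_hasDerivAt_eq_slope (fun u : ℝ => u ^ (p/2))
        (fun u => (p/2) * u ^ (p/2-1)) (by linarith) hcont hderiv
      have hcpos : 0 < c := lt_trans hθ hc.1
      have hcb : c ^ (p/2-1) ≤ max (θ ^ (p/2-1)) ((θ+1) ^ (p/2-1)) := by
        rcases le_or_gt 2 p with h2 | h2
        · exact le_trans (Real.rpow_le_rpow hcpos.le (by linarith [hc.2]) (by linarith))
            (le_max_right _ _)
        · exact le_trans (Real.rpow_le_rpow_of_nonpos hθ hc.1.le (by linarith))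
            (le_max_left _ _)
      have heq2 : (θ+x) ^ (p/2) - θ ^ (p/2) = (p/2) * c ^ (p/2-1) * x := by
        have : (p/2) * c ^ (p/2-1) = ((θ+x) ^ (p/2) - θ ^ (p/2)) / (θ + x - θ) := hceq
        rw [this]
        rw [add_sub_cancel_left, div_mul_cancel₀ _ hx.ne']
      rw [heq2]
      have := mul_le_mul_of_nonneg_right (mul_le_mul_of_nonneg_left hcb
        (by positivity : (0:ℝ) ≤ p/2)) hx0
      calc (p/2) * c ^ (p/2-1) * x ≤ Cb * x := by rw [hCbdef]; exact this
        _ = Cb * x := rfl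
  set D := C ^ (2/p) with hDdef
  have hD : 0 ≤ D := Real.rpow_nonneg hC _
  have hHh : ∀ h : E, H h ^ (2/p) ≤ D * ‖h‖ ^ (2:ℝ) := by
    intro h
    calc H h ^ (2/p) ≤ (C * ‖h‖ ^ p) ^ (2/p) :=
          Real.rpow_le_rpow (hnn h) (hub h) (by positivity)
      _ = D * ‖h‖ ^ (2:ℝ) := by
          rw [Real.mul_rpow hC (Real.rpow_nonneg (norm_nonneg h) _),
            ← Real.rpow_mul (norm_nonneg h)]
          congr 2
          field_simp
  have hG0 : (θ + H 0 ^ (2/p)) ^ (p/2) = θ ^ (p/2) := by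
    rw [h0, Real.zero_rpow (by positivity : 2/p ≠ 0), add_zero]
  have hmain : HasFDerivAt (fun w : E => (θ + H w ^ (2/p)) ^ (p/2)) (0 : E →L[ℝ] ℝ) 0 := by
    rw [hasFDerivAt_iff_isLittleO_nhds_zero]
    rw [Asymptotics.isLittleO_iff]
    intro ε hε
    have hδ : 0 < min 1 (min (1/(D+1)) (ε/(Cb*D+1))) := by positivity
    rw [Metric.eventually_nhds_iff]
    refine ⟨min 1 (min (1/(D+1)) (ε/(Cb*D+1))), hδ, ?_⟩
    intro h hdist
    rw [dist_zero_right] at hdist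
    have hn1 : ‖h‖ ≤ 1 := le_trans hdist.le (min_le_left _ _)
    have hn2 : ‖h‖ ≤ 1/(D+1) := le_trans hdist.le (le_trans (min_le_right _ _) (min_le_left _ _))
    have hn3 : ‖h‖ ≤ ε/(Cb*D+1) :=
      le_trans hdist.le (le_trans (min_le_right _ _) (min_le_right _ _))
    simp only [zero_add, ContinuousLinearMap.zero_apply, sub_zero]
    rw [hG0]
    have hx0 : 0 ≤ H h ^ (2/p) := Real.rpow_nonneg (hnn h) _
    have hDh : D * ‖h‖ ^ (2:ℝ) ≤ D * ‖h‖ := by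
      have : ‖h‖ ^ (2:ℝ) ≤ ‖h‖ := by
        rw [show (2:ℝ) = (2:ℕ) by norm_num, Real.rpow_natCast]
        calc ‖h‖ ^ (2:ℕ) = ‖h‖ * ‖h‖ := by ring
          _ ≤ 1 * ‖h‖ := mul_le_mul_of_nonneg_right hn1 (norm_nonneg h)
          _ = ‖h‖ := one_mul _
      exact mul_le_mul_of_nonneg_left this hD
    have hx1 : H h ^ (2/p) ≤ 1 := by
      have h1 : D * ‖h‖ ≤ D * (1/(D+1)) := mul_le_mul_of_nonneg_left hn2 hD
      have h2 : D * (1/(D+1)) ≤ 1 := by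
        rw [mul_one_div, div_le_one (by linarith)]
        linarith
      linarith [hHh h, hDh]
    have hnonneg : 0 ≤ (θ + H h ^ (2/p)) ^ (p/2) - θ ^ (p/2) := by
      have := Real.rpow_le_rpow hθ.le (by linarith : θ ≤ θ + H h ^ (2/p)) (by positivity : (0:ℝ) ≤ p/2)
      linarith
    have hbound : (θ + H h ^ (2/p)) ^ (p/2) - θ ^ (p/2) ≤ ε * ‖h‖ := by
      calc (θ + H h ^ (2/p)) ^ (p/2) - θ ^ (p/2) ≤ Cb * H h ^ (2/p) := key _ hx0 hx1
        _ ≤ Cb * (D * ‖h‖ ^ (2:ℝ)) := mul_le_mul_of_nonneg_left (hHh h) hCb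
        _ = (Cb * D * ‖h‖) * ‖h‖ := by
            rw [show (2:ℝ) = ((2:ℕ):ℝ) by norm_num, Real.rpow_natCast]
            ring
        _ ≤ ε * ‖h‖ := by
            apply mul_le_mul_of_nonneg_right _ (norm_nonneg h)
            have h3 : Cb * D * ‖h‖ ≤ Cb * D * (ε/(Cb*D+1)) :=
              mul_le_mul_of_nonneg_left hn3 (mul_nonneg hCb hD)
            have h4 : Cb * D * (ε/(Cb*D+1)) ≤ ε := by
              rw [mul_div_assoc', div_le_iff₀ (by positivity)]
              nlinarith [hε.le, mul_nonneg hCb hD]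
            linarith
    rw [Real.norm_eq_abs, abs_of_nonneg hnonneg]
    exact hbound
  have : HasGradientAt (fun w : E => (θ + H w ^ (2/p)) ^ (p/2)) 0 0 := by
    rw [hasGradientAt_iff_hasFDerivAt]
    refine hmain.congr_fderiv ?_
    exact (map_zero _).symm
  exact this.gradient

end Zero

theorem stmt_8 (N : ℕ) (hN : 1 ≤ N) (p lam Lam : ℝ) (hp : 1 < p)
    (hlam : 0 < lam) (hLam : lam ≤ Lam)
    (H : EuclideanSpace ℝ (Fin N) → ℝ)
    (hnn : ∀ z, 0 ≤ H z) (hzero : ∀ z, H z = 0 ↔ z = 0)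
    (hC1 : ContDiff ℝ 1 H)
    (hhom : ∀ t > (0:ℝ), ∀ z, H (t • z) = t ^ p * H z)
    (hd2 : ∀ z : EuclideanSpace ℝ (Fin N), z ≠ 0 →
      DifferentiableAt ℝ (gradient H) z)
    (hell : ∀ z : EuclideanSpace ℝ (Fin N), z ≠ 0 → ∀ v,
      lam * ‖z‖ ^ (p - 2) * ‖v‖ ^ 2 ≤ (inner ℝ (fderiv ℝ (gradient H) z v) v : ℝ) ∧
      (inner ℝ (fderiv ℝ (gradient H) z v) v : ℝ) ≤ Lam * ‖z‖ ^ (p - 2) * ‖v‖ ^ 2)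
    (hdθ : ∀ θ > (0:ℝ), ∀ z : EuclideanSpace ℝ (Fin N),
      DifferentiableAt ℝ (gradient (fun w => (θ + H w ^ (2 / p)) ^ (p / 2))) z) :
    ∃ lt Lt : ℝ, 0 < lt ∧ lt ≤ Lt ∧
      ∀ θ > (0:ℝ), ∀ z : EuclideanSpace ℝ (Fin N), ∀ v,
        lt * (θ + H z ^ (2 / p)) ^ ((p - 2) / 2) * ‖v‖ ^ 2 ≤
          (inner ℝ (fderiv ℝ (gradient (fun w => (θ + H w ^ (2 / p)) ^ (p / 2))) z v) v : ℝ) ∧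
        (inner ℝ (fderiv ℝ (gradient (fun w => (θ + H w ^ (2 / p)) ^ (p / 2))) z v) v : ℝ) ≤
          Lt * (θ + H z ^ (2 / p)) ^ ((p - 2) / 2) * ‖v‖ ^ 2 := by
  have hp0 : (0:ℝ) < p := by linarith
  have hp1 : (0:ℝ) < p - 1 := by linarith
  have hLam0 : (0:ℝ) < Lam := lt_of_lt_of_le hlam hLam
  have hc1 : (0:ℝ) < lam / (p*(p-1)) := by positivity
  have hc2 : (0:ℝ) < Lam / (p*(p-1)) := by positivity
  set μ := min ((lam/(p*(p-1))) ^ ((2-p)/p)) ((Lam/(p*(p-1))) ^ ((2-p)/p)) with hμdef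
  set M := max ((lam/(p*(p-1))) ^ ((2-p)/p)) ((Lam/(p*(p-1))) ^ ((2-p)/p)) with hMdef
  have hμ : 0 < μ := lt_min (Real.rpow_pos_of_pos hc1 _) (Real.rpow_pos_of_pos hc2 _)
  have hM0 : 0 < M := lt_of_lt_of_le hμ (min_le_max)
  have hH : Differentiable ℝ H := hC1.differentiable one_ne_zero
  have h0 : H 0 = 0 := (hzero 0).mpr rfl
  have hpos : ∀ y : EuclideanSpace ℝ (Fin N), y ≠ 0 → 0 < H y := fun y hy =>
    lt_of_le_of_ne (hnn y) (fun h => hy ((hzero y).mp h.symm))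
  refine ⟨lam * μ / p, Lam * M * p / (p-1), by positivity, ?_, ?_⟩
  · rw [div_le_div_iff₀ hp0 hp1]
    have h1 : lam * μ ≤ Lam * M :=
      mul_le_mul hLam (le_trans (min_le_left _ _) (le_max_left _ _)) hμ.le hLam0.le
    have h2 : (p-1) ≤ p * p := by nlinarith
    have := mul_le_mul h1 h2 hp1.le (le_of_lt (mul_pos hLam0 hM0))
    nlinarith [this]
  intro θ hθ z v
  rcases eq_or_ne z 0 with rfl | hz
  · -- z = 0
    rcases eq_or_ne v 0 with rfl | hv
    · constructor <;> simp
    · -- v ≠ 0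
      set g := gradient (fun w : EuclideanSpace ℝ (Fin N) => (θ + H w ^ (2/p)) ^ (p/2)) with hgdef
      have hgd : ∀ y, DifferentiableAt ℝ g y := hdθ θ hθ
      have hub : ∀ y : EuclideanSpace ℝ (Fin N), H y ≤ (Lam/(p*(p-1))) * ‖y‖ ^ p := by
        intro y
        have := H_le hp hH h0 hhom hd2 hell y
        rw [div_mul_eq_mul_div, le_div_iff₀ (by positivity)]
        nlinarith [this]
      have hg0 : g 0 = 0 := gradG_zero hp hθ hnn h0 hc2.le hub
      set φ : ℝ → ℝ := fun t => ⟪v, g (t • v)⟫ with hφdef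
      set φd : ℝ → ℝ := fun t => ⟪v, fderiv ℝ g (t • v) v⟫ with hφddef
      have hφ : ∀ t, HasDerivAt φ (φd t) t := by
        intro t
        have hline : HasDerivAt (fun τ : ℝ => τ • v) v t := by
          simpa using (hasDerivAt_id t).smul_const v
        have hcomp : HasDerivAt (fun τ : ℝ => g (τ • v)) (fderiv ℝ g (t • v) v) t :=
          by have := (hgd (t • v)).hasFDerivAt.comp_hasDerivAt t hline; exact this
        have := (innerSL ℝ v).hasFDerivAt.comp_hasDerivAt t hcomp
        exact this
      have hφd0 : φd 0 = ⟪fderiv ℝ g 0 v, v⟫ := by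
        rw [hφddef]
        simp only [zero_smul]
        exact real_inner_comm _ _
      have hWt : Filter.Tendsto (fun t : ℝ => (θ + H (t • v) ^ (2/p)) ^ ((p-2)/2))
          (𝓝 0) (𝓝 (θ ^ ((p-2)/2))) := by
        have t1 : Filter.Tendsto (fun t : ℝ => H (t • v)) (𝓝 0) (𝓝 0) := by
          have hc : Continuous (fun t : ℝ => H (t • v)) :=
            hC1.continuous.comp (continuous_id.smul continuous_const)
          have := hc.continuousAt (x := (0:ℝ))
          rwa [ContinuousAt, zero_smul, h0] at this
        have t2 : Filter.Tendsto (fun u : ℝ => u ^ (2/p)) (𝓝 0) (𝓝 0) := by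
          have := (Real.continuousAt_rpow_const 0 (2/p) (Or.inr (by positivity))).tendsto
          rwa [Real.zero_rpow (by positivity : (2:ℝ)/p ≠ 0)] at this
        have t3 : Filter.Tendsto (fun u : ℝ => (θ + u) ^ ((p-2)/2)) (𝓝 0)
            (𝓝 (θ ^ ((p-2)/2))) := by
          have hca : ContinuousAt (fun u : ℝ => (θ + u) ^ ((p-2)/2)) 0 := by
            apply ContinuousAt.rpow_const
            · exact (continuous_const.add continuous_id).continuousAt
            · left; simpa using hθ.ne'
          have := hca.tendsto
          rwa [add_zero] at this
        exact t3.comp (t2.comp t1)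
      have hWts : Filter.Tendsto (fun t : ℝ => (θ + H (t • v) ^ (2/p)) ^ ((p-2)/2) * ‖v‖^2)
          (𝓝 0) (𝓝 (θ ^ ((p-2)/2) * ‖v‖^2)) := hWt.mul_const _
      have hlow : ∀ᶠ t in 𝓝[>] (0:ℝ),
          lam * μ / p * ((θ + H (t • v) ^ (2/p)) ^ ((p-2)/2) * ‖v‖^2) ≤ φd t ∧
          φd t ≤ Lam * M * p / (p-1) * ((θ + H (t • v) ^ (2/p)) ^ ((p-2)/2) * ‖v‖^2) := by
        filter_upwards [self_mem_nhdsWithin] with t ht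
        have htv : t • v ≠ 0 := smul_ne_zero (ne_of_gt ht) hv
        have hb := bounds_ne hp hlam hLam hθ hH hpos hhom hd2 hell htv v
        have hcomm : φd t = ⟪fderiv ℝ g (t • v) v, v⟫ := real_inner_comm _ _
        constructor
        · rw [hcomm]
          calc lam * μ / p * ((θ + H (t • v) ^ (2/p)) ^ ((p-2)/2) * ‖v‖^2)
              = lam * μ / p * (θ + H (t • v) ^ (2/p)) ^ ((p-2)/2) * ‖v‖^2 := by ring
            _ ≤ _ := hb.1
        · rw [hcomm]
          calc ⟪fderiv ℝ g (t • v) v, v⟫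
              ≤ Lam * M * p / (p-1) * (θ + H (t • v) ^ (2/p)) ^ ((p-2)/2) * ‖v‖^2 := hb.2
            _ = Lam * M * p / (p-1) * ((θ + H (t • v) ^ (2/p)) ^ ((p-2)/2) * ‖v‖^2) := by ring
      have hgoal1 : lam * μ / p * (θ ^ ((p-2)/2) * ‖v‖^2) ≤ φd 0 := by
        apply le_of_forall_pos_le_add
        intro ε hε
        have hev : ∀ᶠ t in 𝓝[>] (0:ℝ),
            lam * μ / p * (θ ^ ((p-2)/2) * ‖v‖^2) - ε ≤ φd t := by
          have hten : Filter.Tendsto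
              (fun t : ℝ => lam * μ / p * ((θ + H (t • v) ^ (2/p)) ^ ((p-2)/2) * ‖v‖^2))
              (𝓝 0) (𝓝 (lam * μ / p * (θ ^ ((p-2)/2) * ‖v‖^2))) := hWts.const_mul _
          have hevc := hten.eventually (eventually_gt_nhds
            (show lam * μ / p * (θ ^ ((p-2)/2) * ‖v‖^2) - ε
              < lam * μ / p * (θ ^ ((p-2)/2) * ‖v‖^2) by linarith))
          filter_upwards [hlow, hevc.filter_mono nhdsWithin_le_nhds] with t ht1 ht2
          linarith [ht1.1]
        have := deriv0_ge hφ hev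
        linarith
      have hgoal2 : φd 0 ≤ Lam * M * p / (p-1) * (θ ^ ((p-2)/2) * ‖v‖^2) := by
        apply le_of_forall_pos_le_add
        intro ε hε
        have hev : ∀ᶠ t in 𝓝[>] (0:ℝ),
            φd t ≤ Lam * M * p / (p-1) * (θ ^ ((p-2)/2) * ‖v‖^2) + ε := by
          have hten : Filter.Tendsto
              (fun t : ℝ => Lam * M * p / (p-1) * ((θ + H (t • v) ^ (2/p)) ^ ((p-2)/2) * ‖v‖^2))
              (𝓝 0) (𝓝 (Lam * M * p / (p-1) * (θ ^ ((p-2)/2) * ‖v‖^2))) := hWts.const_mul _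
          have hevc := hten.eventually (eventually_lt_nhds
            (show Lam * M * p / (p-1) * (θ ^ ((p-2)/2) * ‖v‖^2)
              < Lam * M * p / (p-1) * (θ ^ ((p-2)/2) * ‖v‖^2) + ε by linarith))
          filter_upwards [hlow, hevc.filter_mono nhdsWithin_le_nhds] with t ht1 ht2
          linarith [ht1.2]
        have := deriv0_le hφ hev
        linarith
      have hw0 : (θ + H (0:EuclideanSpace ℝ (Fin N)) ^ (2/p)) ^ ((p-2)/2) = θ ^ ((p-2)/2) := by
        rw [h0, Real.zero_rpow (by positivity : (2:ℝ)/p ≠ 0), add_zero]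
      rw [hφd0] at hgoal1 hgoal2
      constructor
      · calc lam * μ / p * (θ + H (0:EuclideanSpace ℝ (Fin N)) ^ (2/p)) ^ ((p-2)/2) * ‖v‖^2
            = lam * μ / p * (θ ^ ((p-2)/2) * ‖v‖^2) := by rw [hw0]; ring
          _ ≤ _ := hgoal1
      · calc (inner ℝ (fderiv ℝ g 0 v) v : ℝ)
            ≤ Lam * M * p / (p-1) * (θ ^ ((p-2)/2) * ‖v‖^2) := hgoal2
          _ = Lam * M * p / (p-1) * (θ + H (0:EuclideanSpace ℝ (Fin N)) ^ (2/p)) ^ ((p-2)/2)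
              * ‖v‖^2 := by rw [hw0]; ring
  · exact bounds_ne hp hlam hLam hθ hH hpos hhom hd2 hell hz v
end
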